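/- arXiv:2207.02450 — 3 statements merged into one kernel-verified Lean document; each statement's English description precedes it below -/
import Mathlib

section
/- Let ε > 0 and a ≠ b be real numbers. Let h : ℍ → ℂ be an injective holomorphic map extending continuously to ℍ ∪ (−ε,ε) with h(0) = z₀, and let t : ℍ → ℝ be a bounded harmonic function extending continuously to ℍ ∪ (−ε,0) ∪ (0,ε) with t ≡ a on (−ε,0) and t ≡ b on (0,ε). Set X = (h,t) : ℍ → ℂ × ℝ. Then for every θ ∈ (0,π), the limit of X(r e^{iθ}) as r ↓ 0 exists and equals (z₀, a·(θ/π) + b·(1 − θ/π)); consequently the cluster set C(X, 0) := { p ∈ ℂ × ℝ : there exist wₙ ∈ ℍ with wₙ → 0 and X(wₙ) → p } equals the isotropic line segment L = {z₀} × [min(a,b), max(a,b)]. -/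
set_option maxHeartbeats 1000000

open Complex Set Function Filter Topology

/-- The open upper half-plane in `ℂ`. -/
def UHP : Set ℂ := {w : ℂ | 0 < w.im}

/-- A real-valued function on `ℂ ≅ ℝ²` is harmonic on a set if it is `C²` there and its
Laplacian `f_xx + f_yy` vanishes at every point of the set. -/
def HarmonicOn (f : ℂ → ℝ) (s : Set ℂ) : Prop :=
  ContDiffOn ℝ 2 f s ∧
    ∀ z ∈ s, fderiv ℝ (fun w => fderiv ℝ f w 1) z 1 +
      fderiv ℝ (fun w => fderiv ℝ f w Complex.I) z Complex.I = 0

/-- If a `C²` function has a local max at an interior point and positive second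
directional derivative in direction `e`, contradiction. -/
lemma no_local_max_of_pos_second (ψ : ℂ → ℝ) (z : ℂ) (e : ℂ)
    (hψ : ContDiffAt ℝ 2 ψ z)  -- plus differentiability near z
    (hnear : ∀ᶠ w in 𝓝 z, ContDiffAt ℝ 2 ψ w)
    (hmax : IsLocalMax ψ z)
    (hpos : 0 < fderiv ℝ (fun w => fderiv ℝ ψ w e) z e) : False := by
  -- the line ℓ s = z + s • e
  set ℓ : ℝ → ℂ := fun s => z + s • e with hℓ
  have hℓd : ∀ s : ℝ, HasDerivAt ℓ e s := by
    intro s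
    simpa [hℓ] using ((hasDerivAt_id s).smul_const e).const_add z
  -- G s = fderiv ψ (ℓ s) e
  set G : ℝ → ℝ := fun s => fderiv ℝ ψ (ℓ s) e with hG
  have hfd : ContDiffAt ℝ 1 (fderiv ℝ ψ) z := hψ.fderiv_right (by norm_num)
  have hFd : DifferentiableAt ℝ (fun w => fderiv ℝ ψ w e) z :=
    (hfd.differentiableAt (by norm_num)).clm_apply (differentiableAt_const e)
  have hG0 : HasDerivAt G (fderiv ℝ (fun w => fderiv ℝ ψ w e) z e) 0 := by
    have h1 : HasFDerivAt (fun w => fderiv ℝ ψ w e)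
        (fderiv ℝ (fun w => fderiv ℝ ψ w e) z) z := hFd.hasFDerivAt
    have hz0 : ℓ 0 = z := by simp [hℓ]
    rw [← hz0] at h1
    have := h1.comp_hasDerivAt 0 (hℓd 0)
    simpa [hG, hz0, Function.comp_def] using this
  have hG0val : G 0 = 0 := by
    have : fderiv ℝ ψ z = 0 := hmax.fderiv_eq_zero
    simp [hG, hℓ, this]
  -- slope of G at 0 tends to the positive second derivative
  have hslope : Tendsto (fun s : ℝ => G s / s) (𝓝[>] 0)
      (𝓝 (fderiv ℝ (fun w => fderiv ℝ ψ w e) z e)) := by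
    have := hG0.hasDerivWithinAt (s := Ioi (0:ℝ))
    have h2 := (hasDerivWithinAt_iff_tendsto_slope.1 this)
    have h3 : (Ioi (0:ℝ)) \ {0} = Ioi 0 := by simp
    rw [h3] at h2
    refine h2.congr (fun s => ?_)
    simp [slope, hG0val, div_eq_inv_mul]
  -- eventually G s > 0 for s ∈ (0, ·)
  have hE3 : ∀ᶠ s in 𝓝[>] (0:ℝ), 0 < G s := by
    filter_upwards [hslope.eventually (eventually_gt_nhds hpos),
      self_mem_nhdsWithin] with s hs hs'
    have hs0 : (0:ℝ) < s := hs'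
    have := mul_pos hs hs0
    rwa [div_mul_cancel₀ _ (ne_of_gt hs0)] at this
  -- eventually near 0: smoothness and local max, pulled back along ℓ
  have hℓc : Continuous ℓ := by
    fun_prop
  have hE1 : ∀ᶠ s in 𝓝 (0:ℝ), ContDiffAt ℝ 2 ψ (ℓ s) := by
    have h0 : Tendsto ℓ (𝓝 0) (𝓝 (ℓ 0)) := hℓc.continuousAt
    have hz0 : ℓ 0 = z := by simp [hℓ]
    rw [hz0] at h0
    exact h0.eventually hnear
  have hE2 : ∀ᶠ s in 𝓝 (0:ℝ), ψ (ℓ s) ≤ ψ z := by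
    have h0 : Tendsto ℓ (𝓝 0) (𝓝 (ℓ 0)) := hℓc.continuousAt
    have hz0 : ℓ 0 = z := by simp [hℓ]
    rw [hz0] at h0
    exact h0.eventually hmax
  obtain ⟨δ₁, hδ₁, hball⟩ := Metric.eventually_nhds_iff.1 (hE1.and hE2)
  obtain ⟨δ₂, hδ₂, hIoo⟩ := (mem_nhdsGT_iff_exists_Ioo_subset).1 hE3
  set σ : ℝ := min (δ₁ / 2) (δ₂ / 2) with hσ
  have hδ₂' : 0 < δ₂ := hδ₂
  have hσpos : 0 < σ := lt_min (by linarith) (by linarith)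
  have hmem : ∀ s ∈ Icc (0:ℝ) σ, ContDiffAt ℝ 2 ψ (ℓ s) ∧ ψ (ℓ s) ≤ ψ z := by
    intro s hs
    apply hball
    have h1 : s ≤ δ₁ / 2 := le_trans hs.2 (min_le_left _ _)
    have : |s| < δ₁ := by
      rw [_root_.abs_of_nonneg hs.1]; linarith
    simpa [Real.dist_eq] using this
  -- g = ψ ∘ ℓ is strictly monotone on [0, σ]
  set g : ℝ → ℝ := fun s => ψ (ℓ s) with hgdef
  have hgd : ∀ s ∈ Icc (0:ℝ) σ, HasDerivAt g (G s) s := by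
    intro s hs
    have hd : DifferentiableAt ℝ ψ (ℓ s) := ((hmem s hs).1.differentiableAt (by norm_num))
    exact hd.hasFDerivAt.comp_hasDerivAt s (hℓd s)
  have hmono : StrictMonoOn g (Icc 0 σ) := by
    apply strictMonoOn_of_deriv_pos (convex_Icc 0 σ)
    · exact fun s hs => ((hgd s hs).differentiableAt.continuousAt).continuousWithinAt
    · intro s hs
      rw [interior_Icc] at hs
      rw [(hgd s ⟨le_of_lt hs.1, le_of_lt hs.2⟩).deriv]
      apply hIoo
      constructor
      · exact hs.1
      · exact lt_of_lt_of_le hs.2 (le_trans (min_le_right _ _) (by linarith : δ₂/2 ≤ δ₂))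

  have h1 : g 0 < g σ := hmono (left_mem_Icc.2 (le_of_lt hσpos)) (right_mem_Icc.2 (le_of_lt hσpos)) hσpos
  have h2 : g σ ≤ g 0 := by
    have := (hmem σ (right_mem_Icc.2 (le_of_lt hσpos))).2
    have h0 : g 0 = ψ z := by simp [hgdef, hℓ]
    rw [h0]; exact this
  linarith


lemma hasFDerivAt_q (w : ℂ) (δ : ℝ) : HasFDerivAt (fun w' : ℂ => δ * ((w'.re)^2 + (w'.im)^2))
    (δ • ((2*w.re) • Complex.reCLM + (2*w.im) • Complex.imCLM)) w := by
  have hre : HasFDerivAt (fun w' : ℂ => w'.re) Complex.reCLM w := Complex.reCLM.hasFDerivAt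
  have him : HasFDerivAt (fun w' : ℂ => w'.im) Complex.imCLM w := Complex.imCLM.hasFDerivAt
  have h2 := ((hre.mul hre).add (him.mul him)).const_mul δ
  have e : (fun w' : ℂ => δ * ((w'.re)^2 + (w'.im)^2)) = (fun y => δ * (((fun w' : ℂ => w'.re) * fun w' : ℂ => w'.re) + (fun w' : ℂ => w'.im) * fun w' : ℂ => w'.im) y) := by
    ext w'; simp only [Pi.mul_apply, Pi.add_apply]; ring
  rw [e]
  refine h2.congr_fderiv ?_
  ext v
  simp [two_mul]
  ring

/-- first derivative of ψ = f + δq in direction e, on an open set where f is differentiable -/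
lemma fderiv_psi_apply {Ω : Set ℂ} (δ : ℝ) {f : ℂ → ℝ} {w : ℂ}
    (hfw : DifferentiableAt ℝ f w) (e : ℂ) :
    fderiv ℝ (fun w' => f w' + δ * ((w'.re)^2 + (w'.im)^2)) w e =
      fderiv ℝ f w e + δ * (2*w.re*e.re + 2*w.im*e.im) := by
  have hq := hasFDerivAt_q w δ
  rw [fderiv_fun_add hfw hq.differentiableAt, hq.fderiv]
  simp
  ring

/-- the Laplacian of ψ = f + δ·(re²+im²) is 4δ when f is harmonic at z. -/
lemma psi_laplacian {Ω : Set ℂ} (hΩo : IsOpen Ω) (δ : ℝ) {f : ℂ → ℝ}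
    (hf2 : ContDiffOn ℝ 2 f Ω) {z : ℂ} (hz : z ∈ Ω)
    (hlap : fderiv ℝ (fun w => fderiv ℝ f w 1) z 1 +
      fderiv ℝ (fun w => fderiv ℝ f w Complex.I) z Complex.I = 0) :
    fderiv ℝ (fun w => fderiv ℝ (fun w' => f w' + δ*((w'.re)^2+(w'.im)^2)) w 1) z 1 +
      fderiv ℝ (fun w => fderiv ℝ (fun w' => f w' + δ*((w'.re)^2+(w'.im)^2)) w Complex.I) z
        Complex.I = 4*δ := by
  have hmem : Ω ∈ 𝓝 z := hΩo.mem_nhds hz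
  have hfc2 : ContDiffAt ℝ 2 f z := hf2.contDiffAt hmem
  have hd1 : DifferentiableAt ℝ (fun w => fderiv ℝ f w 1) z :=
    ((hfc2.fderiv_right (m := 1) (by norm_num)).differentiableAt (by norm_num)).clm_apply
      (differentiableAt_const _)
  have hdI : DifferentiableAt ℝ (fun w => fderiv ℝ f w Complex.I) z :=
    ((hfc2.fderiv_right (m := 1) (by norm_num)).differentiableAt (by norm_num)).clm_apply
      (differentiableAt_const _)
  have hdiffnear : ∀ᶠ w in 𝓝 z, DifferentiableAt ℝ f w := by
    filter_upwards [hΩo.eventually_mem hz] with w hw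
    exact (hf2.contDiffAt (hΩo.mem_nhds hw)).differentiableAt (by norm_num)
  -- direction 1
  have hA : (fun w => fderiv ℝ (fun w' => f w' + δ*((w'.re)^2+(w'.im)^2)) w 1) =ᶠ[𝓝 z]
      (fun w => fderiv ℝ f w 1 + δ * (2*w.re)) := by
    filter_upwards [hdiffnear] with w hw
    rw [fderiv_psi_apply (Ω := Ω) δ hw 1]
    simp
  have hB : (fun w => fderiv ℝ (fun w' => f w' + δ*((w'.re)^2+(w'.im)^2)) w Complex.I) =ᶠ[𝓝 z]
      (fun w => fderiv ℝ f w Complex.I + δ * (2*w.im)) := by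
    filter_upwards [hdiffnear] with w hw
    rw [fderiv_psi_apply (Ω := Ω) δ hw Complex.I]
    simp
  rw [hA.fderiv_eq, hB.fderiv_eq]
  have hre : DifferentiableAt ℝ (fun w : ℂ => δ * (2*w.re)) z :=
    ((Complex.reCLM.differentiableAt (x := z)).const_mul 2).const_mul δ
  have him : DifferentiableAt ℝ (fun w : ℂ => δ * (2*w.im)) z :=
    ((Complex.imCLM.differentiableAt (x := z)).const_mul 2).const_mul δ
  rw [fderiv_fun_add hd1 hre, fderiv_fun_add hdI him]
  have e1 : fderiv ℝ (fun w : ℂ => δ * (2*w.re)) z 1 = δ * 2 := by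
    have : HasFDerivAt (fun w : ℂ => δ * (2*w.re)) ((δ*2) • Complex.reCLM) z := by
      have := Complex.reCLM.hasFDerivAt (x := z) |>.const_mul (δ*2)
      rw [show (fun w : ℂ => δ * (2*w.re)) = fun y => δ * 2 * Complex.reCLM y by
        ext w; simp only [Complex.reCLM_apply]; ring]
      exact this
    rw [this.fderiv]; simp
  have eI : fderiv ℝ (fun w : ℂ => δ * (2*w.im)) z Complex.I = δ * 2 := by
    have : HasFDerivAt (fun w : ℂ => δ * (2*w.im)) ((δ*2) • Complex.imCLM) z := by
      have := Complex.imCLM.hasFDerivAt (x := z) |>.const_mul (δ*2)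
      rw [show (fun w : ℂ => δ * (2*w.im)) = fun y => δ * 2 * Complex.imCLM y by
        ext w; simp only [Complex.imCLM_apply]; ring]
      exact this
    rw [this.fderiv]; simp
  simp only [ContinuousLinearMap.add_apply]
  rw [e1, eI]
  linarith

/-- **Maximum principle for harmonic functions** on a bounded open set. -/
theorem harmonic_max_principle {Ω : Set ℂ} (hΩo : IsOpen Ω) (hΩb : Bornology.IsBounded Ω)
    {f : ℂ → ℝ} (hf : HarmonicOn f Ω) (hfc : ContinuousOn f (closure Ω))
    (hfr : ∀ z ∈ frontier Ω, f z ≤ 0) : ∀ z ∈ Ω, f z ≤ 0 := by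
  intro z hz
  obtain ⟨R₀, hR₀⟩ := hΩb.subset_closedBall 0
  set R : ℝ := max R₀ 1 with hRdef
  have hR1 : (1:ℝ) ≤ R := le_max_right _ _
  have hRpos : (0:ℝ) < R := by linarith
  have hsub : closure Ω ⊆ Metric.closedBall 0 R :=
    closure_minimal (hR₀.trans (Metric.closedBall_subset_closedBall (le_max_left _ _)))
      Metric.isClosed_closedBall
  have hqbd : ∀ w ∈ closure Ω, (w.re)^2 + (w.im)^2 ≤ R^2 := by
    intro w hw
    have := hsub hw
    rw [Metric.mem_closedBall, dist_zero_right] at this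
    have h2 : (w.re)^2 + (w.im)^2 = ‖w‖^2 := by
      have := Complex.normSq_apply w
      have h3 := Complex.sq_norm w
      nlinarith [Complex.normSq_apply w, Complex.sq_norm w]
    rw [h2]
    exact pow_le_pow_left₀ (norm_nonneg _) this 2
  -- main claim
  have key : ∀ δ : ℝ, 0 < δ → f z ≤ δ * R^2 := by
    intro δ hδ
    set ψ : ℂ → ℝ := fun w => f w + δ * ((w.re)^2 + (w.im)^2) with hψdef
    have hψc : ContinuousOn ψ (closure Ω) := by
      apply hfc.add
      apply Continuous.continuousOn
      continuity
    have hK : IsCompact (closure Ω) := Metric.isCompact_of_isClosed_isBounded isClosed_closure hΩb.closure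
    obtain ⟨zs, hzsK, hzsmax⟩ := hK.exists_isMaxOn ⟨z, subset_closure hz⟩ hψc
    have hcase : zs ∈ Ω ∨ zs ∈ frontier Ω := by
      rcases em (zs ∈ Ω) with h | h
      · exact Or.inl h
      · right
        rw [hΩo.frontier_eq]
        exact ⟨hzsK, h⟩
    rcases hcase with hin | hfrt
    · exfalso
      have hnear : ∀ᶠ w in 𝓝 zs, ContDiffAt ℝ 2 ψ w := by
        filter_upwards [hΩo.eventually_mem hin] with w hw
        refine (hf.1.contDiffAt (hΩo.mem_nhds hw)).add (ContDiff.contDiffAt ?_)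
        exact (contDiff_const (c := δ)).mul
          ((Complex.reCLM.contDiff.pow 2).add (Complex.imCLM.contDiff.pow 2))
      have hψat : ContDiffAt ℝ 2 ψ zs := hnear.self_of_nhds
      have hlocmax : IsLocalMax ψ zs :=
        hzsmax.isLocalMax (Filter.mem_of_superset (hΩo.mem_nhds hin) subset_closure)
      have hlap := psi_laplacian hΩo δ hf.1 hin (hf.2 zs hin)
      have hpos : 0 < fderiv ℝ (fun w => fderiv ℝ ψ w 1) zs 1 ∨
          0 < fderiv ℝ (fun w => fderiv ℝ ψ w Complex.I) zs Complex.I := by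
        by_contra hcon
        push_neg at hcon
        have hψe : ψ = fun w' => f w' + δ*((w'.re)^2+(w'.im)^2) := hψdef
        rw [hψe] at hcon
        nlinarith [hcon.1, hcon.2, hlap]
      rcases hpos with h | h
      · exact no_local_max_of_pos_second ψ zs 1 hψat hnear hlocmax h
      · exact no_local_max_of_pos_second ψ zs Complex.I hψat hnear hlocmax h
    · -- max on frontier
      have h1 : f z ≤ ψ z := by
        have : 0 ≤ δ * ((z.re)^2 + (z.im)^2) := by positivity
        simp only [hψdef]; linarith
      have h2 : ψ z ≤ ψ zs := hzsmax (subset_closure hz)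
      have h3 : ψ zs ≤ δ * R^2 := by
        have hf0 : f zs ≤ 0 := hfr zs hfrt
        have hq : (zs.re)^2 + (zs.im)^2 ≤ R^2 := hqbd zs (frontier_subset_closure hfrt)
        have : δ * ((zs.re)^2 + (zs.im)^2) ≤ δ * R^2 := by nlinarith
        simp only [hψdef]; linarith
      linarith
  by_contra hcon
  push_neg at hcon
  have hR2 : (0:ℝ) < R^2 := by positivity
  have := key (f z / (2 * R^2)) (by positivity)
  rw [div_mul_eq_mul_div, mul_comm] at this
  have : f z ≤ f z / 2 := by
    calc f z ≤ R^2 * f z / (2*R^2) := this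
    _ = f z / 2 := by field_simp
  linarith

lemma fderiv_re_comp {U : Set ℂ} (hU : IsOpen U) {S : ℂ → ℂ}
    (hS : DifferentiableOn ℂ S U) {z : ℂ} (hz : z ∈ U) (e : ℂ) :
    fderiv ℝ (fun w => (S w).re) z e = ((deriv S z) * e).re := by
  have hd : DifferentiableAt ℂ S z := hS.differentiableAt (hU.mem_nhds hz)
  have hD : HasDerivAt S (deriv S z) z := hd.hasDerivAt
  have h1 : HasFDerivAt S ((1 : ℂ →L[ℂ] ℂ).smulRight (deriv S z)) z := hD.hasFDerivAt
  have h2 := (Complex.reCLM.hasFDerivAt).comp z (h1.restrictScalars ℝ)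
  have h3 : HasFDerivAt (fun w => (S w).re)
      (Complex.reCLM.comp ((ContinuousLinearMap.smulRight (1 : ℂ →L[ℂ] ℂ)
        (deriv S z)).restrictScalars ℝ)) z := h2
  rw [h3.fderiv]
  simp [mul_comm]

lemma harmonicOn_re_of_holo {U : Set ℂ} (hU : IsOpen U) {S : ℂ → ℂ}
    (hS : DifferentiableOn ℂ S U) : HarmonicOn (fun w => (S w).re) U := by
  have hT : DifferentiableOn ℂ (deriv S) U := (hS.analyticOnNhd hU).deriv.differentiableOn
  constructor
  · have h1 : ContDiffOn ℂ 2 S U := hS.contDiffOn hU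
    exact Complex.reCLM.contDiff.comp_contDiffOn (h1.restrict_scalars ℝ)
  · intro z hz
    have key : ∀ e : ℂ, fderiv ℝ (fun w => fderiv ℝ (fun w' => (S w').re) w e) z e =
        ((deriv (deriv S) z) * e * e).re := by
      intro e
      have hEq : (fun w => fderiv ℝ (fun w' => (S w').re) w e) =ᶠ[𝓝 z]
          (fun w => ((deriv S w) * e).re) := by
        filter_upwards [hU.eventually_mem hz] with w hw
        exact fderiv_re_comp hU hS hw e
      rw [hEq.fderiv_eq]
      have hTe : DifferentiableOn ℂ (fun w => deriv S w * e) U := hT.mul_const e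
      have := fderiv_re_comp hU hTe hz e
      rw [this]
      congr 2
      have : deriv (fun w => deriv S w * e) z = deriv (deriv S) z * e := by
        exact deriv_mul_const (hT.differentiableAt (hU.mem_nhds hz)) e
      rw [this]
    rw [key 1, key Complex.I]
    have : deriv (deriv S) z * Complex.I * Complex.I = -(deriv (deriv S) z) := by
      rw [mul_assoc, Complex.I_mul_I]; ring
    rw [this]
    simp

/-- difference of harmonic functions is harmonic on an open set -/
lemma harmonicOn_sub {U : Set ℂ} (hU : IsOpen U) {f g : ℂ → ℝ}
    (hf : HarmonicOn f U) (hg : HarmonicOn g U) : HarmonicOn (fun w => f w - g w) U := by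
  constructor
  · exact hf.1.sub hg.1
  · intro z hz
    have hdf : ∀ w ∈ U, DifferentiableAt ℝ f w := fun w hw =>
      (hf.1.contDiffAt (hU.mem_nhds hw)).differentiableAt (by norm_num)
    have hdg : ∀ w ∈ U, DifferentiableAt ℝ g w := fun w hw =>
      (hg.1.contDiffAt (hU.mem_nhds hw)).differentiableAt (by norm_num)
    have key : ∀ e : ℂ, fderiv ℝ (fun w => fderiv ℝ (fun w' => f w' - g w') w e) z e =
        fderiv ℝ (fun w => fderiv ℝ f w e) z e - fderiv ℝ (fun w => fderiv ℝ g w e) z e := by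
      intro e
      have hEq : (fun w => fderiv ℝ (fun w' => f w' - g w') w e) =ᶠ[𝓝 z]
          (fun w => fderiv ℝ f w e - fderiv ℝ g w e) := by
        filter_upwards [hU.eventually_mem hz] with w hw
        rw [fderiv_fun_sub (hdf w hw) (hdg w hw)]
        simp
      rw [hEq.fderiv_eq]
      have h1 : DifferentiableAt ℝ (fun w => fderiv ℝ f w e) z :=
        (((hf.1.contDiffAt (hU.mem_nhds hz)).fderiv_right (m := 1)
          (by norm_num)).differentiableAt (by norm_num)).clm_apply (differentiableAt_const _)
      have h2 : DifferentiableAt ℝ (fun w => fderiv ℝ g w e) z :=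
        (((hg.1.contDiffAt (hU.mem_nhds hz)).fderiv_right (m := 1)
          (by norm_num)).differentiableAt (by norm_num)).clm_apply (differentiableAt_const _)
      rw [fderiv_fun_sub h1 h2]
      simp
    rw [key 1, key Complex.I]
    have := hf.2 z hz
    have := hg.2 z hz
    linarith

lemma HarmonicOn.mono' {U V : Set ℂ} {f : ℂ → ℝ} (hf : HarmonicOn f U) (hV : V ⊆ U) :
    HarmonicOn f V :=
  ⟨hf.1.mono hV, fun z hz => hf.2 z (hV hz)⟩

lemma harmonicOn_congr {U : Set ℂ} (hU : IsOpen U) {f g : ℂ → ℝ}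
    (hg : HarmonicOn g U) (hfg : ∀ w ∈ U, f w = g w) : HarmonicOn f U := by
  constructor
  · exact (hg.1.congr hfg)
  · intro z hz
    have hfd : ∀ e : ℂ, (fun w => fderiv ℝ f w e) =ᶠ[𝓝 z] (fun w => fderiv ℝ g w e) := by
      intro e
      filter_upwards [hU.eventually_mem hz] with w hw
      have : f =ᶠ[𝓝 w] g := by
        filter_upwards [hU.eventually_mem hw] with y hy using hfg y hy
      rw [this.fderiv_eq]
    rw [(hfd 1).fderiv_eq, (hfd Complex.I).fderiv_eq]
    exact hg.2 z hz

noncomputable section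

/-- The comparison harmonic function with the right boundary values. -/
def vfun (a b : ℝ) : ℂ → ℝ := fun w => b + (a - b) / Real.pi * Complex.arg w

lemma UHP_subset_slitPlane : UHP ⊆ Complex.slitPlane := by
  intro w hw
  exact Complex.mem_slitPlane_iff.2 (Or.inr (ne_of_gt hw))

lemma vfun_eq_re (a b : ℝ) (w : ℂ) :
    vfun a b w = ((b : ℂ) + (((a - b) / Real.pi : ℝ) : ℂ) *
      (-Complex.I * Complex.log w)).re := by
  simp [vfun, Complex.add_re, Complex.mul_re, Complex.log_im]

lemma sq_le_to_le {A B : ℝ} (hA : 0 ≤ A) (hB : 0 ≤ B) (h : A^2 ≤ B^2) : A ≤ B := by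
  nlinarith

lemma arith_arc {e h x y : ℝ} (he : 0 < e) (hh : 0 < h) (hhe : h ≤ e)
    (hsq : x^2 + y^2 = e^2) (hy0 : 0 ≤ y) (hy : y < h) (hx : 0 ≤ x) :
    (x - e)^2 + y^2 ≤ (2*h)^2 := by
  have hxe : x ≤ e := by nlinarith
  have h1 : (e - x) * e ≤ h^2 := by nlinarith [mul_nonneg (sub_nonneg.2 hxe) hx]
  have h2 : e - x ≤ h^2/e := by rw [le_div_iff₀ he]; linarith
  have h3 : h^2/e ≤ h := by rw [div_le_iff₀ he]; nlinarith
  have h4 : e - x ≤ h := le_trans h2 h3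
  nlinarith

/-- Main analytic lemma: near 0, `t` is uniformly close to `vfun a b`. -/
theorem main_bound (ε : ℝ) (hε : 0 < ε) (a b : ℝ) (t : ℂ → ℝ)
    (ht : HarmonicOn t UHP)
    (htbd : ∃ M : ℝ, ∀ w ∈ UHP, |t w| ≤ M)
    (htc : ContinuousOn t
      (UHP ∪ (Complex.ofReal '' (Set.Ioo (-ε) 0 ∪ Set.Ioo 0 ε))))
    (hta : ∀ s ∈ Set.Ioo (-ε) 0, t (s : ℂ) = a)
    (htb : ∀ s ∈ Set.Ioo 0 ε, t (s : ℂ) = b) :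
    ∀ δ > 0, ∃ r > 0, ∀ w ∈ UHP, ‖w‖ < r → |t w - vfun a b w| ≤ δ := by
  intro δ hδ
  obtain ⟨M₀, hM₀⟩ := htbd
  set Iset : Set ℂ := Complex.ofReal '' (Set.Ioo (-ε) 0 ∪ Set.Ioo 0 ε) with hIset
  set u : ℂ → ℝ := fun w => t w - vfun a b w with hu
  set ε' : ℝ := ε / 2 with hε'
  have hε'pos : 0 < ε' := by positivity
  set δ' : ℝ := δ / 4 with hδ'
  have hδ'pos : 0 < δ' := by positivity
  set M' : ℝ := |M₀| + |a| + |b| + 1 with hM'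
  have hM'pos : (0:ℝ) < M' := by positivity
  -- |u| ≤ M' on UHP
  have hubd : ∀ w ∈ UHP, |u w| ≤ M' := by
    intro w hw
    have h1 : |t w| ≤ |M₀| := le_trans (hM₀ w hw) (le_abs_self _)
    have harg1 : 0 ≤ Complex.arg w := Complex.arg_nonneg_iff.2 (le_of_lt hw)
    have harg2 : Complex.arg w ≤ Real.pi := Complex.arg_le_pi w
    have hπ : (0:ℝ) < Real.pi := Real.pi_pos
    have hv : |vfun a b w| ≤ |a| + |b| := by
      rw [vfun]
      set s : ℝ := Complex.arg w / Real.pi with hs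
      have hs0 : 0 ≤ s := by positivity
      have hs1 : s ≤ 1 := by
        rw [hs, div_le_one hπ]; exact harg2
      have : b + (a - b) / Real.pi * Complex.arg w = s * a + (1 - s) * b := by
        rw [hs]; field_simp; ring
      rw [this]
      calc |s * a + (1 - s) * b| ≤ |s * a| + |(1-s) * b| := abs_add_le _ _
        _ = |s| * |a| + |1-s| * |b| := by rw [abs_mul, abs_mul]
        _ = s * |a| + (1-s) * |b| := by
            rw [_root_.abs_of_nonneg hs0, _root_.abs_of_nonneg (by linarith : (0:ℝ) ≤ 1 - s)]
        _ ≤ 1 * |a| + 1 * |b| := by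
            have := abs_nonneg a; have := abs_nonneg b
            nlinarith
        _ = |a| + |b| := by ring
    calc |u w| = |t w - vfun a b w| := rfl
      _ ≤ |t w| + |vfun a b w| := abs_sub _ _
      _ ≤ |M₀| + (|a| + |b|) := add_le_add h1 hv
      _ ≤ M' := by rw [hM']; linarith
  -- u vanishes on the real punctured interval
  have huzero : ∀ x : ℝ, x ≠ 0 → |x| < ε → u (x : ℂ) = 0 := by
    intro x hx0 hxε
    rcases lt_or_gt_of_ne hx0 with hneg | hpos
    · have hta' := hta x ⟨by cases abs_lt.1 hxε; linarith, hneg⟩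
      have : Complex.arg (x : ℂ) = Real.pi := Complex.arg_ofReal_of_neg hneg
      simp [hu, vfun, this, hta']
    · have htb' := htb x ⟨hpos, by cases abs_lt.1 hxε; linarith⟩
      have : Complex.arg (x : ℂ) = 0 := Complex.arg_ofReal_of_nonneg (le_of_lt hpos)
      simp [hu, vfun, this, htb']
  -- continuity of u on UHP ∪ Iset
  have hargc : ContinuousOn Complex.arg ({w : ℂ | 0 < w.im} ∪ {w : ℂ | w.im = 0 ∧ w.re ≠ 0}) := by
    intro w hw
    rcases hw with hw | ⟨him, hre⟩
    · exact (Complex.continuousAt_arg (Or.inr (ne_of_gt hw))).continuousWithinAt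
    · rcases lt_or_gt_of_ne hre with hre' | hre'
      · apply (Complex.continuousWithinAt_arg_of_re_neg_of_im_zero hre' him).mono
        intro z hz
        simp only [mem_union, mem_setOf_eq] at hz ⊢
        rcases hz with hz | ⟨hz, _⟩
        · exact le_of_lt hz
        · exact le_of_eq hz.symm
      · exact (Complex.continuousAt_arg (Or.inl hre')).continuousWithinAt
  have hsetsub : UHP ∪ Iset ⊆ {w : ℂ | 0 < w.im} ∪ {w : ℂ | w.im = 0 ∧ w.re ≠ 0} := by
    intro w hw
    rcases hw with hw | ⟨x, hx, rfl⟩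
    · exact Or.inl hw
    · right
      constructor
      · simp
      · rcases hx with hx | hx
        · simp; exact ne_of_lt hx.2
        · simp; exact ne_of_gt hx.1
  have hvc : ContinuousOn (vfun a b) (UHP ∪ Iset) := by
    apply ContinuousOn.add continuousOn_const
    exact (continuousOn_const.mul (hargc.mono hsetsub))
  have huc : ContinuousOn u (UHP ∪ Iset) := htc.sub hvc
  -- continuity of u at ε' and -ε' within the domain, with value 0
  have humem : ∀ (σ : ℝ), σ = 1 ∨ σ = -1 → ((σ * ε' : ℝ) : ℂ) ∈ UHP ∪ Iset := by
    intro σ hσ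
    right
    refine ⟨σ * ε', ?_, rfl⟩
    rcases hσ with rfl | rfl
    · right; constructor <;> [linarith; linarith [hε'pos]]
    · left; constructor <;> [linarith [hε]; linarith [hε'pos]]
  have huval : ∀ σ : ℝ, σ = 1 ∨ σ = -1 → u ((σ * ε' : ℝ) : ℂ) = 0 := by
    intro σ hσ
    apply huzero
    · rcases hσ with rfl | rfl
      · simp; positivity
      · simp; intro hh; linarith
    · have habs : |σ * ε'| = ε' := by
        rcases hσ with rfl | rfl <;>
          simp [abs_mul, _root_.abs_of_nonneg (le_of_lt hε'pos)]
      rw [habs, hε']; linarith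
  -- uniform closeness near ±ε'
  have hcont : ∀ σ : ℝ, σ = 1 ∨ σ = -1 → ∃ r₁ > 0, ∀ w ∈ UHP ∪ Iset,
      ‖w - ((σ * ε' : ℝ) : ℂ)‖ < r₁ → |u w| < δ' := by
    intro σ hσ
    have hcw : ContinuousWithinAt u (UHP ∪ Iset) ((σ * ε' : ℝ) : ℂ) :=
      huc _ (humem σ hσ)
    rw [Metric.continuousWithinAt_iff] at hcw
    obtain ⟨r₁, hr₁, hball⟩ := hcw δ' hδ'pos
    refine ⟨r₁, hr₁, fun w hw hdist => ?_⟩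
    have := hball hw (by rwa [Complex.dist_eq])
    rwa [Real.dist_eq, huval σ hσ, sub_zero] at this
  obtain ⟨rp, hrp, hnearp⟩ := hcont 1 (Or.inl rfl)
  obtain ⟨rm, hrm, hnearm⟩ := hcont (-1) (Or.inr rfl)
  set r₁ : ℝ := min rp rm with hr₁def
  have hr₁pos : 0 < r₁ := lt_min hrp hrm
  set h₀ : ℝ := min (r₁/4) (ε'/2) with hh₀def
  have hh₀pos : 0 < h₀ := lt_min (by positivity) (by positivity)
  have hh₀ε' : h₀ ≤ ε' := le_trans (min_le_right _ _) (by linarith)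
  -- geometry: arc points with small imaginary part are near ±ε'
  have hgeom : ∀ w : ℂ, ‖w‖ = ε' → 0 ≤ w.im → w.im < h₀ →
      (0 ≤ w.re → ‖w - ((ε' : ℝ) : ℂ)‖ ≤ 2 * h₀) ∧
      (w.re ≤ 0 → ‖w + ((ε' : ℝ) : ℂ)‖ ≤ 2 * h₀) := by
    intro w habs him hless
    have hsq : w.re^2 + w.im^2 = ε'^2 := by
      have h1 := Complex.sq_norm w
      have h2 := Complex.normSq_apply w
      rw [habs] at h1
      nlinarith [h1, h2]

    constructor
    · intro hre
      have hA2 : (‖w - ((ε' : ℝ) : ℂ)‖)^2 = (w.re - ε')^2 + w.im^2 := by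
        rw [Complex.sq_norm, Complex.normSq_apply]
        simp; ring
      have hA0 : 0 ≤ ‖w - ((ε' : ℝ) : ℂ)‖ := norm_nonneg _
      have := arith_arc hε'pos hh₀pos hh₀ε' hsq him hless hre
      apply sq_le_to_le hA0 (by positivity)
      rw [hA2]; exact this
    · intro hre
      have hsq' : (-w.re)^2 + w.im^2 = ε'^2 := by nlinarith [hsq]
      have hA2 : (‖w + ((ε' : ℝ) : ℂ)‖)^2 = (-w.re - ε')^2 + w.im^2 := by
        rw [Complex.sq_norm, Complex.normSq_apply]
        simp; ring
      have hA0 : 0 ≤ ‖w + ((ε' : ℝ) : ℂ)‖ := norm_nonneg _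
      have := arith_arc hε'pos hh₀pos hh₀ε' hsq' him hless (by linarith : (0:ℝ) ≤ -w.re)
      apply sq_le_to_le hA0 (by positivity)
      rw [hA2]; exact this
  have hUHPopen : IsOpen UHP := isOpen_lt continuous_const Complex.continuous_im
  -- the barrier comparison
  have comparison : ∀ η : ℝ, 0 < η → ∀ ρ : ℝ, 0 < ρ → ρ ≤ ε' * Real.exp (-(M'/η)) →
      ∀ w₀ ∈ UHP, ρ < ‖w₀‖ → ‖w₀‖ < ε' →
      |u w₀| ≤ δ' + (M'/h₀) * w₀.im + η * (Real.log ε' - Real.log (‖w₀‖)) := by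
    intro η hη ρ hρ hρ2 w₀ hw₀ hw₀ρ hw₀ε'
    have hexp1 : Real.exp (-(M'/η)) < 1 := by
      have h0 : -(M'/η) < 0 := by
        have : 0 < M'/η := by positivity
        linarith
      have := Real.exp_lt_exp.2 h0
      rwa [Real.exp_zero] at this
    have hρε' : ρ < ε' :=
      lt_of_le_of_lt hρ2 (by nlinarith [Real.exp_pos (-(M'/η)), hε'pos])
    set Ω : Set ℂ := {w : ℂ | 0 < w.im ∧ ρ < ‖w‖ ∧ ‖w‖ < ε'} with hΩdef
    have hΩo : IsOpen Ω := by
      have h1 : IsOpen {w : ℂ | 0 < w.im} := isOpen_lt continuous_const Complex.continuous_im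
      have h2 : IsOpen {w : ℂ | ρ < ‖w‖} :=
        isOpen_lt continuous_const continuous_norm
      have h3 : IsOpen {w : ℂ | ‖w‖ < ε'} :=
        isOpen_lt continuous_norm continuous_const
      have hseteq : Ω = {w : ℂ | 0 < w.im} ∩
          ({w : ℂ | ρ < ‖w‖} ∩ {w : ℂ | ‖w‖ < ε'}) := by
        ext w; simp [hΩdef, mem_setOf_eq, mem_inter_iff, and_assoc]
      rw [hseteq]; exact h1.inter (h2.inter h3)
    have hΩb : Bornology.IsBounded Ω := by
      apply Bornology.IsBounded.subset (Metric.isBounded_ball (x := (0:ℂ)) (r := ε'))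
      intro w hw
      rw [Metric.mem_ball, dist_zero_right]
      exact hw.2.2
    set C : Set ℂ := {w : ℂ | 0 ≤ w.im ∧ ρ ≤ ‖w‖ ∧ ‖w‖ ≤ ε'} with hCdef
    have hCclosed : IsClosed C := by
      have c1 : IsClosed {w : ℂ | 0 ≤ w.im} := isClosed_le continuous_const Complex.continuous_im
      have c2 : IsClosed {w : ℂ | ρ ≤ ‖w‖} :=
        isClosed_le continuous_const continuous_norm
      have c3 : IsClosed {w : ℂ | ‖w‖ ≤ ε'} :=
        isClosed_le continuous_norm continuous_const
      have hseteq : C = {w : ℂ | 0 ≤ w.im} ∩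
          ({w : ℂ | ρ ≤ ‖w‖} ∩ {w : ℂ | ‖w‖ ≤ ε'}) := by
        ext w; simp [hCdef, mem_setOf_eq, mem_inter_iff, and_assoc]
      rw [hseteq]; exact c1.inter (c2.inter c3)
    have hΩC : Ω ⊆ C := fun w hw => ⟨le_of_lt hw.1, le_of_lt hw.2.1, le_of_lt hw.2.2⟩
    have hclosure : closure Ω ⊆ C := closure_minimal hΩC hCclosed
    have hCsub : C ⊆ UHP ∪ Iset := by
      intro w hw
      rcases eq_or_lt_of_le hw.1 with him | him
      · right
        have hwre : w = ((w.re : ℝ) : ℂ) := Complex.ext (by simp) (by simp [← him])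
        have habs : ‖w‖ = |w.re| := by rw [hwre, Complex.norm_real]; simp
        refine ⟨w.re, ?_, hwre.symm⟩
        have h1 : ρ ≤ |w.re| := by rw [← habs]; exact hw.2.1
        have h2 : |w.re| ≤ ε' := by rw [← habs]; exact hw.2.2
        have hne : w.re ≠ 0 := by
          intro h; rw [h] at h1; simp at h1; linarith
        have h2' := abs_le.1 h2
        rcases lt_or_gt_of_ne hne with hlt | hgt
        · left; exact ⟨by linarith [h2'.1, hε'pos, hε], hlt⟩
        · right; exact ⟨hgt, by linarith [h2'.2, hε'pos, hε]⟩
      · exact Or.inl him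
    set β : ℂ → ℝ := fun w =>
      δ' + (M'/h₀) * w.im + η * (Real.log ε' - Real.log (‖w‖)) with hβdef
    have hβc : ContinuousOn β C := by
      apply ContinuousOn.add
      · exact continuousOn_const.add
          (continuousOn_const.mul Complex.continuous_im.continuousOn)
      · apply continuousOn_const.mul
        apply ContinuousOn.sub continuousOn_const
        intro w hw
        have habs0 : ‖w‖ ≠ 0 := ne_of_gt (lt_of_lt_of_le hρ hw.2.1)
        exact ((Real.continuousAt_log habs0).comp
          continuous_norm.continuousAt).continuousWithinAt
    have hucC : ContinuousOn u C := huc.mono hCsub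
    have hfrontier : ∀ z ∈ frontier Ω, |u z| ≤ β z := by
      intro z hz
      have hzC : z ∈ C := hclosure (frontier_subset_closure hz)
      have hznΩ : z ∉ Ω := by
        intro hmem
        rw [hΩo.frontier_eq] at hz
        exact hz.2 hmem
      have him0 : 0 ≤ z.im := hzC.1
      have hρz : ρ ≤ ‖z‖ := hzC.2.1
      have hzε' : ‖z‖ ≤ ε' := hzC.2.2
      have habs0 : 0 < ‖z‖ := lt_of_lt_of_le hρ hρz
      have hlogz : Real.log (‖z‖) ≤ Real.log ε' := Real.log_le_log habs0 hzε'
      have hηterm : 0 ≤ η * (Real.log ε' - Real.log (‖z‖)) :=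
        mul_nonneg (le_of_lt hη) (by linarith)
      rcases eq_or_lt_of_le him0 with him | him
      · -- real boundary point
        have hwre : z = ((z.re : ℝ) : ℂ) := Complex.ext (by simp) (by simp [← him])
        have habs : ‖z‖ = |z.re| := by rw [hwre, Complex.norm_real]; simp
        have hne : z.re ≠ 0 := by
          intro h
          rw [habs, h] at habs0; simp at habs0
        have hu0 : u z = 0 := by
          rw [hwre]
          exact huzero z.re hne (by rw [← habs]; linarith [hzε', hε'pos, hε])
        rw [hu0]
        simp only [abs_zero, hβdef]
        have h3 : (M'/h₀) * z.im = 0 := by rw [← him, mul_zero]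
        linarith [hδ'pos]
      · -- interior-height boundary point
        have hzUHP : z ∈ UHP := him
        have hMz : |u z| ≤ M' := hubd z hzUHP
        have hcase : ‖z‖ = ρ ∨ ‖z‖ = ε' := by
          by_contra hc
          push_neg at hc
          exact hznΩ ⟨him, lt_of_le_of_ne hρz (Ne.symm hc.1), lt_of_le_of_ne hzε' hc.2⟩
        have himpos : 0 ≤ (M'/h₀) * z.im := mul_nonneg (by positivity) (le_of_lt him)
        rcases hcase with hcρ | hcε
        · have hlogρ : Real.log ρ ≤ Real.log ε' - M'/η := by
            have h1 : Real.log (ε' * Real.exp (-(M'/η))) = Real.log ε' + (-(M'/η)) := by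
              rw [Real.log_mul (ne_of_gt hε'pos) (ne_of_gt (Real.exp_pos _)), Real.log_exp]
            have h2 : Real.log ρ ≤ Real.log (ε' * Real.exp (-(M'/η))) :=
              Real.log_le_log hρ hρ2
            linarith
          have hterm : M' ≤ η * (Real.log ε' - Real.log (‖z‖)) := by
            rw [hcρ]
            have hle2 : M'/η ≤ Real.log ε' - Real.log ρ := by linarith
            calc M' = η * (M'/η) := by field_simp
              _ ≤ η * (Real.log ε' - Real.log ρ) :=
                  mul_le_mul_of_nonneg_left hle2 (le_of_lt hη)
          simp only [hβdef]
          linarith [hMz, hδ'pos, himpos]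
        · rcases le_or_gt h₀ z.im with hbig | hsmall
          · have hterm : M' ≤ (M'/h₀) * z.im := by
              calc M' = (M'/h₀) * h₀ := by field_simp
                _ ≤ (M'/h₀) * z.im := mul_le_mul_of_nonneg_left hbig (by positivity)
            simp only [hβdef]
            linarith [hMz, hδ'pos, hηterm]
          · have hzmem : z ∈ UHP ∪ Iset := Or.inl hzUHP
            have h2h : 2*h₀ < r₁ := by
              have ha : h₀ ≤ r₁/4 := min_le_left _ _
              linarith [hr₁pos]
            have hδbound : |u z| < δ' := by
              rcases le_or_gt 0 z.re with hre | hre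
              · apply hnearp z hzmem
                have hd := (hgeom z hcε him0 hsmall).1 hre
                have heq : ((1 * ε' : ℝ) : ℂ) = ((ε' : ℝ) : ℂ) := by norm_num
                rw [heq]
                calc ‖z - ((ε' : ℝ) : ℂ)‖ ≤ 2*h₀ := hd
                  _ < r₁ := h2h
                  _ ≤ rp := min_le_left _ _
              · apply hnearm z hzmem
                have hd := (hgeom z hcε him0 hsmall).2 (le_of_lt hre)
                have heq : z - ((-1 * ε' : ℝ) : ℂ) = z + ((ε' : ℝ) : ℂ) := by
                  push_cast; ring
                rw [heq]
                calc ‖z + ((ε' : ℝ) : ℂ)‖ ≤ 2*h₀ := hd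
                  _ < r₁ := h2h
                  _ ≤ rm := min_le_right _ _
            simp only [hβdef]
            linarith [hδbound, hηterm, himpos]
    -- holomorphic representatives of the harmonic comparison functions
    set V : ℂ → ℂ := fun w => (b:ℂ) + (((a-b)/Real.pi : ℝ):ℂ) * (-Complex.I * Complex.log w)
      with hV
    set B : ℂ → ℂ := fun w => ((δ' : ℝ):ℂ) + ((M'/h₀ : ℝ):ℂ) * (-Complex.I * w) +
      ((η : ℝ):ℂ) * (((Real.log ε' : ℝ):ℂ) - Complex.log w) with hB
    have hlogd : DifferentiableOn ℂ Complex.log UHP := fun w hw =>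
      (Complex.differentiableAt_log (UHP_subset_slitPlane hw)).differentiableWithinAt
    have hVd : DifferentiableOn ℂ V UHP := by
      apply DifferentiableOn.add (differentiableOn_const _)
      exact ((hlogd.const_mul (-Complex.I)).const_mul _)
    have hBd : DifferentiableOn ℂ B UHP := by
      apply DifferentiableOn.add
      · apply DifferentiableOn.add (differentiableOn_const _)
        exact (differentiableOn_id.const_mul (-Complex.I)).const_mul _
      · exact ((differentiableOn_const _).sub hlogd).const_mul _
    have hVre : ∀ w : ℂ, (V w).re = vfun a b w := by
      intro w
      have h1 : (-Complex.I * Complex.log w).re = Complex.arg w := by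
        simp [Complex.mul_re, Complex.log_im]
      rw [hV]
      simp only [Complex.add_re, Complex.ofReal_re, Complex.re_ofReal_mul, h1, vfun]
    have hBre : ∀ w : ℂ, (B w).re = β w := by
      intro w
      have h1 : (-Complex.I * w).re = w.im := by simp [Complex.mul_re]
      rw [hB]
      simp only [Complex.add_re, Complex.ofReal_re, Complex.re_ofReal_mul, h1,
        Complex.sub_re, Complex.log_re, hβdef]
    have hΩUHP : Ω ⊆ UHP := fun w hw => hw.1
    -- harmonicity of ±u − β on Ω
    have hharm1 : HarmonicOn (fun w => u w - β w) Ω := by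
      have hW : HarmonicOn (fun w => ((fun w' => V w' + B w') w).re) Ω :=
        (harmonicOn_re_of_holo hUHPopen (hVd.add hBd)).mono' hΩUHP
      have hsub' := harmonicOn_sub hΩo (ht.mono' hΩUHP) hW
      apply harmonicOn_congr hΩo hsub'
      intro w hw
      have hre : (V w + B w).re = vfun a b w + β w := by
        rw [Complex.add_re, hVre w, hBre w]
      simp only [hu, hre]
      ring
    have hharm2 : HarmonicOn (fun w => -u w - β w) Ω := by
      have hW : HarmonicOn (fun w => ((fun w' => V w' - B w') w).re) Ω :=
        (harmonicOn_re_of_holo hUHPopen (hVd.sub hBd)).mono' hΩUHP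
      have hsub' := harmonicOn_sub hΩo hW (ht.mono' hΩUHP)
      apply harmonicOn_congr hΩo hsub'
      intro w hw
      have hre : (V w - B w).re = vfun a b w - β w := by
        rw [Complex.sub_re, hVre w, hBre w]
      simp only [hu, hre]
      ring
    -- continuity on the closure
    have hcls : ContinuousOn u (closure Ω) := hucC.mono hclosure
    have hβcls : ContinuousOn β (closure Ω) := hβc.mono hclosure
    have hmp1 := harmonic_max_principle hΩo hΩb hharm1 (hcls.sub hβcls)
      (fun z hz => by linarith [le_abs_self (u z), hfrontier z hz])
    have hmp2 := harmonic_max_principle hΩo hΩb hharm2 ((hcls.neg).sub hβcls)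
      (fun z hz => by linarith [neg_abs_le (u z), hfrontier z hz])
    have hw₀Ω : w₀ ∈ Ω := ⟨hw₀, hw₀ρ, hw₀ε'⟩
    have h1 := hmp1 w₀ hw₀Ω
    have h2 := hmp2 w₀ hw₀Ω
    have hβw : β w₀ = δ' + (M'/h₀) * w₀.im + η * (Real.log ε' - Real.log (‖w₀‖)) :=
      rfl
    rw [← hβw]
    exact abs_le.2 ⟨by linarith, by linarith⟩
  -- conclusion
  refine ⟨min (ε'/2) (δ' * h₀ / M'), lt_min (by positivity) (by positivity), ?_⟩
  intro w hw hwr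
  have hw0 : w ≠ 0 := by
    intro h
    have : (0:ℝ) < w.im := hw
    rw [h] at this
    simp at this
  have habs0 : 0 < ‖w‖ := norm_pos_iff.2 hw0
  have hwε' : ‖w‖ < ε' :=
    lt_of_lt_of_le hwr (le_trans (min_le_left _ _) (by linarith))
  have hL : 0 ≤ Real.log ε' - Real.log (‖w‖) := by
    have := Real.log_le_log habs0 (le_of_lt hwε')
    linarith
  have key : ∀ η : ℝ, 0 < η →
      |u w| ≤ δ' + (M'/h₀) * w.im + η * (Real.log ε' - Real.log (‖w‖)) := by
    intro η hη
    set ρ := min (‖w‖ / 2) (ε' * Real.exp (-(M'/η))) with hρdef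
    have hρpos : 0 < ρ := lt_min (by positivity) (by positivity)
    exact comparison η hη ρ hρpos (min_le_right _ _) w hw
      (lt_of_le_of_lt (min_le_left _ _) (by linarith [habs0])) hwε'
  have key2 : |u w| ≤ δ' + (M'/h₀) * w.im := by
    apply le_of_forall_pos_le_add
    intro c hc
    set L := Real.log ε' - Real.log (‖w‖) with hLdef
    have hk := key (c / (L+1)) (by positivity)
    have hLc : (c/(L+1)) * L ≤ c := by
      rw [div_mul_eq_mul_div, div_le_iff₀ (by linarith : (0:ℝ) < L + 1)]
      nlinarith [hc, hL]
    linarith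
  have him : w.im ≤ ‖w‖ := le_trans (le_abs_self _) (Complex.abs_im_le_norm w)
  have hwr2 : ‖w‖ ≤ δ' * h₀ / M' := le_of_lt (lt_of_lt_of_le hwr (min_le_right _ _))
  have hM'div : (M'/h₀) * w.im ≤ δ' := by
    calc (M'/h₀) * w.im ≤ (M'/h₀) * (δ' * h₀ / M') := by
          apply mul_le_mul_of_nonneg_left (le_trans him hwr2) (by positivity)
      _ = δ' := by field_simp
  calc |t w - vfun a b w| = |u w| := rfl
    _ ≤ δ' + δ' := by linarith [key2, hM'div]
    _ ≤ δ := by rw [hδ']; linarith [hδ]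

end

section assembly

variable (ε : ℝ) (hε : 0 < ε) (a b : ℝ) (hab : a ≠ b) (z₀ : ℂ)
    (h : ℂ → ℂ) (t : ℂ → ℝ)

-- basic facts about the ray
lemma ray_mem_UHP {θ : ℝ} (hθ : θ ∈ Set.Ioo 0 Real.pi) {r : ℝ} (hr : 0 < r) :
    (r : ℂ) * Complex.exp ((θ : ℂ) * Complex.I) ∈ UHP := by
  have him : ((r : ℂ) * Complex.exp ((θ : ℂ) * Complex.I)).im = r * Real.sin θ := by
    rw [Complex.exp_mul_I, Complex.im_ofReal_mul]
    simp [Complex.cos_ofReal_im, Complex.sin_ofReal_re]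
  have hsin : 0 < Real.sin θ := Real.sin_pos_of_pos_of_lt_pi hθ.1 hθ.2
  show 0 < ((r : ℂ) * Complex.exp ((θ : ℂ) * Complex.I)).im
  rw [him]; positivity

lemma ray_abs {θ : ℝ} {r : ℝ} (hr : 0 ≤ r) :
    ‖(r : ℂ) * Complex.exp ((θ : ℂ) * Complex.I)‖ = r := by
  rw [norm_mul, Complex.norm_exp_ofReal_mul_I, Complex.norm_real, mul_one,
    Real.norm_eq_abs, _root_.abs_of_nonneg hr]

lemma ray_arg {θ : ℝ} (hθ : θ ∈ Set.Ioo 0 Real.pi) {r : ℝ} (hr : 0 < r) :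
    Complex.arg ((r : ℂ) * Complex.exp ((θ : ℂ) * Complex.I)) = θ := by
  rw [Complex.arg_real_mul _ hr, Complex.exp_mul_I]
  push_cast
  exact Complex.arg_cos_add_sin_mul_I ⟨by linarith [Real.pi_pos, hθ.1], le_of_lt hθ.2⟩

lemma tendsto_ray_zero {θ : ℝ} :
    Tendsto (fun r : ℝ => (r : ℂ) * Complex.exp ((θ : ℂ) * Complex.I)) (𝓝[>] 0) (𝓝 0) := by
  have hc : Continuous (fun r : ℝ => (r : ℂ) * Complex.exp ((θ : ℂ) * Complex.I)) :=
    Complex.continuous_ofReal.mul continuous_const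
  have := hc.tendsto 0
  simp only [Complex.ofReal_zero, zero_mul] at this
  exact this.mono_left nhdsWithin_le_nhds

/-- The limit of h along any sequence/filter in UHP approaching 0. -/
lemma h_tendsto (hhc : ContinuousOn h (UHP ∪ (Complex.ofReal '' Set.Ioo (-ε) ε)))
    (hz₀ : h 0 = z₀) (hε : 0 < ε) :
    Tendsto h (𝓝[UHP ∪ (Complex.ofReal '' Set.Ioo (-ε) ε)] 0) (𝓝 z₀) := by
  have h0mem : (0 : ℂ) ∈ UHP ∪ (Complex.ofReal '' Set.Ioo (-ε) ε) := by
    right; exact ⟨0, ⟨by linarith, hε⟩, by simp⟩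
  have := hhc 0 h0mem
  rw [ContinuousWithinAt, hz₀] at this
  exact this

/-- Part 1: the radial limits. -/
lemma part1 (hhc : ContinuousOn h (UHP ∪ (Complex.ofReal '' Set.Ioo (-ε) ε)))
    (hz₀ : h 0 = z₀) (hε : 0 < ε)
    (hmb : ∀ δ > 0, ∃ r > 0, ∀ w ∈ UHP, ‖w‖ < r → |t w - vfun a b w| ≤ δ) :
    ∀ θ ∈ Set.Ioo 0 Real.pi,
      Tendsto (fun r : ℝ =>
          (h ((r : ℂ) * Complex.exp ((θ : ℂ) * Complex.I)),
           t ((r : ℂ) * Complex.exp ((θ : ℂ) * Complex.I))))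
        (𝓝[>] 0)
        (𝓝 (z₀, a * (θ / Real.pi) + b * (1 - θ / Real.pi))) := by
  intro θ hθ
  set p : ℝ → ℂ := fun r => (r : ℂ) * Complex.exp ((θ : ℂ) * Complex.I) with hp
  have hmem : ∀ᶠ r in 𝓝[>] (0:ℝ), p r ∈ UHP := by
    filter_upwards [self_mem_nhdsWithin] with r hr
    exact ray_mem_UHP hθ hr
  -- first coordinate
  have h1 : Tendsto (fun r => h (p r)) (𝓝[>] (0:ℝ)) (𝓝 z₀) := by
    apply (h_tendsto ε z₀ h hhc hz₀ hε).comp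
    apply tendsto_nhdsWithin_of_tendsto_nhds_of_eventually_within
    · exact tendsto_ray_zero
    · filter_upwards [hmem] with r hr using Or.inl hr
  -- second coordinate
  have hval : a * (θ / Real.pi) + b * (1 - θ / Real.pi) = b + (a - b)/Real.pi * θ := by
    have hπ := Real.pi_ne_zero
    field_simp
    ring
  have h2 : Tendsto (fun r => t (p r)) (𝓝[>] (0:ℝ))
      (𝓝 (a * (θ / Real.pi) + b * (1 - θ / Real.pi))) := by
    rw [Metric.tendsto_nhds]
    intro δ hδ
    obtain ⟨r₀, hr₀, hbound⟩ := hmb (δ/2) (by positivity)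
    have hIoo : Set.Ioo (0:ℝ) r₀ ∈ 𝓝[>] (0:ℝ) :=
      Ioo_mem_nhdsGT_of_mem ⟨le_refl _, hr₀⟩
    filter_upwards [hIoo] with r hr
    have hrpos : 0 < r := hr.1
    have hpU : p r ∈ UHP := ray_mem_UHP hθ hrpos
    have habs : ‖p r‖ = r := ray_abs (le_of_lt hrpos)
    have hb := hbound (p r) hpU (by rw [habs]; exact hr.2)
    have hargval : vfun a b (p r) = a * (θ / Real.pi) + b * (1 - θ / Real.pi) := by
      show b + (a - b) / Real.pi * Complex.arg (p r) = _
      rw [ray_arg hθ hrpos, hval]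
    rw [Real.dist_eq, ← hargval]
    calc |t (p r) - vfun a b (p r)| ≤ δ/2 := hb
      _ < δ := by linarith
  exact h1.prodMk_nhds h2

lemma vfun_mem_Icc {w : ℂ} (hw : w ∈ UHP) :
    vfun a b w ∈ Set.Icc (min a b) (max a b) := by
  have h0 : 0 ≤ Complex.arg w := Complex.arg_nonneg_iff.2 (le_of_lt hw)
  have h1 : Complex.arg w ≤ Real.pi := Complex.arg_le_pi w
  have hπ : 0 < Real.pi := Real.pi_pos
  set s : ℝ := Complex.arg w / Real.pi with hs
  have hs0 : 0 ≤ s := by positivity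
  have hs1 : s ≤ 1 := by rw [hs, div_le_one hπ]; exact h1
  have heq : vfun a b w = s * a + (1-s) * b := by
    rw [vfun, hs]; field_simp; ring
  rw [heq]
  have hmina := min_le_left a b
  have hminb := min_le_right a b
  have hmaxa := le_max_left a b
  have hmaxb := le_max_right a b
  constructor
  · nlinarith [mul_nonneg hs0 (sub_nonneg.2 hmina), mul_nonneg (by linarith : (0:ℝ) ≤ 1-s)
      (sub_nonneg.2 hminb)]
  · nlinarith [mul_nonneg hs0 (sub_nonneg.2 hmaxa), mul_nonneg (by linarith : (0:ℝ) ≤ 1-s)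
      (sub_nonneg.2 hmaxb)]

lemma one_div_succ_tendsto : Tendsto (fun n : ℕ => 1/((n:ℝ)+1)) atTop (𝓝 0) :=
  tendsto_one_div_add_atTop_nhds_zero_nat

/-- Part 2. -/
lemma part2 (hε : 0 < ε) (hab : a ≠ b)
    (hhc : ContinuousOn h (UHP ∪ (Complex.ofReal '' Set.Ioo (-ε) ε)))
    (hz₀ : h 0 = z₀)
    (htc : ContinuousOn t
      (UHP ∪ (Complex.ofReal '' (Set.Ioo (-ε) 0 ∪ Set.Ioo 0 ε))))
    (hta : ∀ s ∈ Set.Ioo (-ε) 0, t (s : ℂ) = a)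
    (htb : ∀ s ∈ Set.Ioo 0 ε, t (s : ℂ) = b)
    (hmb : ∀ δ > 0, ∃ r > 0, ∀ w ∈ UHP, ‖w‖ < r → |t w - vfun a b w| ≤ δ)
    (hpart1 : ∀ θ ∈ Set.Ioo 0 Real.pi,
      Tendsto (fun r : ℝ =>
          (h ((r : ℂ) * Complex.exp ((θ : ℂ) * Complex.I)),
           t ((r : ℂ) * Complex.exp ((θ : ℂ) * Complex.I))))
        (𝓝[>] 0)
        (𝓝 (z₀, a * (θ / Real.pi) + b * (1 - θ / Real.pi)))) :
    {p : ℂ × ℝ | ∃ u : ℕ → ℂ, (∀ n, u n ∈ UHP) ∧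
        Tendsto u atTop (𝓝 0) ∧
        Tendsto (fun n => (h (u n), t (u n))) atTop (𝓝 p)} =
      {z₀} ×ˢ Set.Icc (min a b) (max a b) := by
  ext p
  simp only [mem_setOf_eq, mem_prod, mem_singleton_iff, mem_Icc]
  constructor
  · rintro ⟨u, humem, hu0, huX⟩
    have huS : Tendsto u atTop (𝓝[UHP ∪ (Complex.ofReal '' Set.Ioo (-ε) ε)] 0) :=
      tendsto_nhdsWithin_of_tendsto_nhds_of_eventually_within _ hu0
        (Eventually.of_forall fun n => Or.inl (humem n))
    have hh1 : Tendsto (fun n => h (u n)) atTop (𝓝 z₀) :=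
      (h_tendsto ε z₀ h hhc hz₀ hε).comp huS
    have hfst : Tendsto (fun n => h (u n)) atTop (𝓝 p.1) :=
      (continuous_fst.tendsto p).comp huX
    have hp1 : p.1 = z₀ := tendsto_nhds_unique hfst hh1
    have hsnd : Tendsto (fun n => t (u n)) atTop (𝓝 p.2) :=
      (continuous_snd.tendsto p).comp huX
    have hdiff : Tendsto (fun n => t (u n) - vfun a b (u n)) atTop (𝓝 0) := by
      rw [Metric.tendsto_nhds]
      intro δ hδ
      obtain ⟨r, hr, hbound⟩ := hmb (δ/2) (by positivity)
      have : ∀ᶠ n in atTop, ‖u n‖ < r := by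
        have := Metric.tendsto_nhds.1 hu0 r hr
        filter_upwards [this] with n hn
        rwa [Complex.dist_eq, sub_zero] at hn
      filter_upwards [this] with n hn
      rw [Real.dist_eq, sub_zero]
      calc |t (u n) - vfun a b (u n)| ≤ δ/2 := hbound (u n) (humem n) hn
        _ < δ := by linarith
    have hv : Tendsto (fun n => vfun a b (u n)) atTop (𝓝 p.2) := by
      have := hsnd.sub hdiff
      simp only [sub_sub_cancel, sub_zero] at this
      exact this
    have hp2 := isClosed_Icc.mem_of_tendsto hv
      (Eventually.of_forall fun n => vfun_mem_Icc a b (humem n))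
    exact ⟨hp1, hp2.1, hp2.2⟩
  · rintro ⟨hp1, hp2a, hp2b⟩
    have hpeq : p = (z₀, p.2) := Prod.ext hp1 rfl
    -- boundary helper
    have boundary_case : ∀ (c : ℝ) (x : ℕ → ℝ), (∀ n, x n ∈ Set.Ioo (-ε) 0 ∪ Set.Ioo 0 ε) →
        (∀ n, t ((x n : ℝ) : ℂ) = c) → Tendsto x atTop (𝓝 0) →
        ∃ u : ℕ → ℂ, (∀ n, u n ∈ UHP) ∧ Tendsto u atTop (𝓝 0) ∧
          Tendsto (fun n => (h (u n), t (u n))) atTop (𝓝 (z₀, c)) := by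
      intro c x hxmem hxval hx0
      have hex : ∀ n : ℕ, ∃ w, w ∈ UHP ∧ dist w ((x n : ℝ) : ℂ) < 1/((n:ℝ)+1) ∧
          |t w - c| < 1/((n:ℝ)+1) := by
        intro n
        have hmem' : ((x n : ℝ) : ℂ) ∈ UHP ∪ (Complex.ofReal '' (Set.Ioo (-ε) 0 ∪ Set.Ioo 0 ε)) :=
          Or.inr ⟨x n, hxmem n, rfl⟩
        have hct := htc _ hmem'
        rw [Metric.continuousWithinAt_iff] at hct
        obtain ⟨ρ, hρ, hball⟩ := hct (1/((n:ℝ)+1)) (by positivity)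
        set m : ℝ := min ρ (1/((n:ℝ)+1)) / 2 with hm
        have hmpos : 0 < m := by
          have := lt_min hρ (by positivity : (0:ℝ) < 1/((n:ℝ)+1))
          positivity
        refine ⟨((x n : ℝ) : ℂ) + (m : ℂ) * Complex.I, ?_, ?_, ?_⟩
        · show 0 < (((x n : ℝ) : ℂ) + (m : ℂ) * Complex.I).im
          simp [Complex.add_im, Complex.mul_im]
          exact hmpos
        · have hd : dist (((x n : ℝ) : ℂ) + (m : ℂ) * Complex.I) ((x n : ℝ) : ℂ) = m := by
            rw [Complex.dist_eq]
            simp only [add_sub_cancel_left]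
            rw [norm_mul, Complex.norm_I, Complex.norm_real, mul_one, Real.norm_eq_abs,
              _root_.abs_of_nonneg (le_of_lt hmpos)]
          rw [hd]
          have h1 : m ≤ (1/((n:ℝ)+1))/2 := by
            have := min_le_right ρ (1/((n:ℝ)+1))
            rw [hm]; linarith
          have h2 : (0:ℝ) < 1/((n:ℝ)+1) := by positivity
          linarith
        · have hd : dist (((x n : ℝ) : ℂ) + (m : ℂ) * Complex.I) ((x n : ℝ) : ℂ) = m := by
            rw [Complex.dist_eq]
            simp only [add_sub_cancel_left]
            rw [norm_mul, Complex.norm_I, Complex.norm_real, mul_one, Real.norm_eq_abs,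
              _root_.abs_of_nonneg (le_of_lt hmpos)]
          have hmρ : m < ρ := by
            have := min_le_left ρ (1/((n:ℝ)+1))
            rw [hm]; linarith
          have hwmem : ((x n : ℝ) : ℂ) + (m : ℂ) * Complex.I ∈
              UHP ∪ (Complex.ofReal '' (Set.Ioo (-ε) 0 ∪ Set.Ioo 0 ε)) := by
            left
            show 0 < (((x n : ℝ) : ℂ) + (m : ℂ) * Complex.I).im
            simp [Complex.add_im, Complex.mul_im]
            exact hmpos
          have := hball hwmem (by rw [hd]; exact hmρ)
          rw [Real.dist_eq, hxval n] at this
          exact this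
      choose w hwU hwd hwt using hex
      have hw0 : Tendsto w atTop (𝓝 0) := by
        rw [tendsto_iff_dist_tendsto_zero]
        have hxc : Tendsto (fun n : ℕ => dist (((x n : ℝ)):ℂ) 0) atTop (𝓝 0) := by
          have hx : Tendsto (fun n => ((x n : ℝ):ℂ)) atTop (𝓝 0) := by
            have := (Complex.continuous_ofReal.tendsto 0).comp hx0
            simpa [Function.comp_def] using this
          exact tendsto_iff_dist_tendsto_zero.1 hx
        have hg : Tendsto (fun n : ℕ => 1/((n:ℝ)+1) + dist ((x n : ℝ) : ℂ) 0) atTop (𝓝 0) := by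
          have := one_div_succ_tendsto.add hxc
          simpa using this
        apply squeeze_zero (fun n => dist_nonneg) (fun n => ?_) hg
        calc dist (w n) 0 ≤ dist (w n) ((x n : ℝ) : ℂ) + dist ((x n : ℝ) : ℂ) 0 :=
              dist_triangle _ _ _
          _ ≤ 1/((n:ℝ)+1) + dist ((x n : ℝ) : ℂ) 0 := by linarith [hwd n]
      refine ⟨w, hwU, hw0, ?_⟩
      apply Tendsto.prodMk_nhds
      · apply (h_tendsto ε z₀ h hhc hz₀ hε).comp
        apply tendsto_nhdsWithin_of_tendsto_nhds_of_eventually_within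
        · exact hw0
        · exact Eventually.of_forall fun n => Or.inl (hwU n)
      · rw [tendsto_iff_dist_tendsto_zero]
        apply squeeze_zero (fun n => dist_nonneg)
          (fun n => le_of_lt (by rw [Real.dist_eq]; exact hwt n)) one_div_succ_tendsto
    -- now the three cases
    by_cases hca : p.2 = a
    · obtain ⟨u, h1, h2, h3⟩ := boundary_case a (fun n => -ε/(2*((n:ℝ)+1)))
        (fun n => by
          left
          refine ⟨?_, ?_⟩
          · show -ε < -ε/(2*((n:ℝ)+1))
            have h0 : (0:ℝ) < 2*((n:ℝ)+1) := by positivity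
            rw [neg_div]
            have : ε/(2*((n:ℝ)+1)) ≤ ε/2 := by
              apply div_le_div_of_nonneg_left (le_of_lt hε) (by norm_num) (by linarith)
            linarith
          · show -ε/(2*((n:ℝ)+1)) < 0
            have : (0:ℝ) < ε/(2*((n:ℝ)+1)) := by positivity
            rw [neg_div]; linarith)
        (fun n => hta _ (by
          refine ⟨?_, ?_⟩
          · show -ε < -ε/(2*((n:ℝ)+1))
            have h0 : (0:ℝ) < 2*((n:ℝ)+1) := by positivity
            rw [neg_div]
            have : ε/(2*((n:ℝ)+1)) ≤ ε/2 := by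
              apply div_le_div_of_nonneg_left (le_of_lt hε) (by norm_num) (by linarith)
            linarith
          · show -ε/(2*((n:ℝ)+1)) < 0
            have : (0:ℝ) < ε/(2*((n:ℝ)+1)) := by positivity
            rw [neg_div]; linarith))
        (by
          have heq : (fun n : ℕ => -ε/(2*((n:ℝ)+1))) = fun n : ℕ => (-ε/2) * (1/((n:ℝ)+1)) := by
            funext n; field_simp
          rw [heq]
          have := one_div_succ_tendsto.const_mul (-ε/2)
          simpa using this)
      exact ⟨u, h1, h2, by rw [hpeq, hca]; exact h3⟩
    · by_cases hcb : p.2 = b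
      · obtain ⟨u, h1, h2, h3⟩ := boundary_case b (fun n => ε/(2*((n:ℝ)+1)))
          (fun n => by
            right
            refine ⟨?_, ?_⟩
            · show (0:ℝ) < ε/(2*((n:ℝ)+1))
              positivity
            · show ε/(2*((n:ℝ)+1)) < ε
              have h0 : (0:ℝ) < 2*((n:ℝ)+1) := by positivity
              have : ε/(2*((n:ℝ)+1)) ≤ ε/2 := by
                apply div_le_div_of_nonneg_left (le_of_lt hε) (by norm_num) (by linarith)
              linarith)
          (fun n => htb _ (by
            refine ⟨?_, ?_⟩
            · show (0:ℝ) < ε/(2*((n:ℝ)+1))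
              positivity
            · show ε/(2*((n:ℝ)+1)) < ε
              have h0 : (0:ℝ) < 2*((n:ℝ)+1) := by positivity
              have : ε/(2*((n:ℝ)+1)) ≤ ε/2 := by
                apply div_le_div_of_nonneg_left (le_of_lt hε) (by norm_num) (by linarith)
              linarith))
          (by
            have heq : (fun n : ℕ => ε/(2*((n:ℝ)+1))) = fun n : ℕ => (ε/2) * (1/((n:ℝ)+1)) := by
              funext n; field_simp
            rw [heq]
            have := one_div_succ_tendsto.const_mul (ε/2)
            simpa using this)
        exact ⟨u, h1, h2, by rw [hpeq, hcb]; exact h3⟩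
      · -- interior case
        have hab' : a - b ≠ 0 := sub_ne_zero.2 hab
        set s : ℝ := (p.2 - b)/(a - b) with hsdef
        have hs01 : 0 ≤ s ∧ s ≤ 1 := by
          rcases lt_or_gt_of_ne hab with hlt | hgt
          · have hmin : min a b = a := min_eq_left (le_of_lt hlt)
            have hmax : max a b = b := max_eq_right (le_of_lt hlt)
            rw [hmin] at hp2a; rw [hmax] at hp2b
            have hrw : s = (b - p.2)/(b - a) := by
              rw [hsdef, ← neg_div_neg_eq]; ring_nf
            constructor
            · rw [hrw]; apply div_nonneg <;> linarith
            · rw [hrw, div_le_one (by linarith)]; linarith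
          · have hmin : min a b = b := min_eq_right (le_of_lt hgt)
            have hmax : max a b = a := max_eq_left (le_of_lt hgt)
            rw [hmin] at hp2a; rw [hmax] at hp2b
            constructor
            · rw [hsdef]; apply div_nonneg <;> linarith
            · rw [hsdef, div_le_one (by linarith)]; linarith
        have hmul : s * (a - b) = p.2 - b := div_mul_cancel₀ _ hab'
        have hsne0 : s ≠ 0 := by
          intro h0
          rw [h0, zero_mul] at hmul
          exact hcb (by linarith)
        have hsne1 : s ≠ 1 := by
          intro h1
          rw [h1, one_mul] at hmul
          exact hca (by linarith)
        have hπ : (0:ℝ) < Real.pi := Real.pi_pos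
        set θ : ℝ := s * Real.pi with hθdef
        have hθ : θ ∈ Set.Ioo 0 Real.pi := by
          constructor
          · have : 0 < s := lt_of_le_of_ne hs01.1 (Ne.symm hsne0)
            positivity
          · have : s < 1 := lt_of_le_of_ne hs01.2 hsne1
            rw [hθdef]
            nlinarith
        have hvalue : a * (θ / Real.pi) + b * (1 - θ / Real.pi) = p.2 := by
          have hθπ : θ / Real.pi = s := by
            rw [hθdef, mul_div_assoc, div_self (ne_of_gt hπ), mul_one]
          rw [hθπ]
          linear_combination hmul
        have hrseq : Tendsto (fun n : ℕ => 1/((n:ℝ)+1)) atTop (𝓝[>] (0:ℝ)) :=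
          tendsto_nhdsWithin_of_tendsto_nhds_of_eventually_within _ one_div_succ_tendsto
            (Eventually.of_forall fun n =>
              Set.mem_Ioi.2 (by positivity : (0:ℝ) < 1/((n:ℝ)+1)))
        set u : ℕ → ℂ := fun n =>
          ((1/((n:ℝ)+1) : ℝ) : ℂ) * Complex.exp ((θ : ℂ) * Complex.I) with hudef
        have hX := (hpart1 θ hθ).comp hrseq
        refine ⟨u, fun n => ray_mem_UHP hθ (by positivity : (0:ℝ) < 1/((n:ℝ)+1)),
          tendsto_ray_zero.comp hrseq, ?_⟩
        rw [hpeq]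
        have heq2 : ((z₀, p.2) : ℂ × ℝ) =
            (z₀, a * (θ / Real.pi) + b * (1 - θ / Real.pi)) := by rw [hvalue]
        rw [heq2]
        exact hX

end assembly

/-- **The isotropic line as the cluster set of the surface at the jump point.**
With `h` injective holomorphic on `ℍ`, continuous up to `(-ε,ε)` with `h(0) = z₀`, and `t`
bounded harmonic on `ℍ`, continuous up to `(-ε,0) ∪ (0,ε)` with `t ≡ a` on `(-ε,0)` and
`t ≡ b` on `(0,ε)`, the map `X = (h,t)` satisfies: for each `θ ∈ (0,π)`,
`X(r e^{iθ}) → (z₀, a·θ/π + b·(1-θ/π))` as `r ↓ 0`; consequently the cluster set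
`C(X,0)` equals the isotropic segment `L = {z₀} × [min a b, max a b]`. -/
theorem cluster_set_is_isotropic_line
    (ε : ℝ) (hε : 0 < ε) (a b : ℝ) (hab : a ≠ b) (z₀ : ℂ)
    (h : ℂ → ℂ) (t : ℂ → ℝ)
    (hh : DifferentiableOn ℂ h UHP)
    (hhinj : Set.InjOn h UHP)
    (hhc : ContinuousOn h (UHP ∪ (Complex.ofReal '' Set.Ioo (-ε) ε)))
    (hz₀ : h 0 = z₀)
    (ht : HarmonicOn t UHP)
    (htbd : ∃ M : ℝ, ∀ w ∈ UHP, |t w| ≤ M)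
    (htc : ContinuousOn t
      (UHP ∪ (Complex.ofReal '' (Set.Ioo (-ε) 0 ∪ Set.Ioo 0 ε))))
    (hta : ∀ s ∈ Set.Ioo (-ε) 0, t (s : ℂ) = a)
    (htb : ∀ s ∈ Set.Ioo 0 ε, t (s : ℂ) = b) :
    (∀ θ ∈ Set.Ioo 0 Real.pi,
      Tendsto (fun r : ℝ =>
          (h ((r : ℂ) * Complex.exp ((θ : ℂ) * Complex.I)),
           t ((r : ℂ) * Complex.exp ((θ : ℂ) * Complex.I))))
        (𝓝[>] 0)
        (𝓝 (z₀, a * (θ / Real.pi) + b * (1 - θ / Real.pi)))) ∧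
    {p : ℂ × ℝ | ∃ u : ℕ → ℂ, (∀ n, u n ∈ UHP) ∧
        Tendsto u atTop (𝓝 0) ∧
        Tendsto (fun n => (h (u n), t (u n))) atTop (𝓝 p)} =
      {z₀} ×ˢ Set.Icc (min a b) (max a b) := by
  have hmb := main_bound ε hε a b t ht htbd htc hta htb
  have hp1 := part1 ε a b z₀ h t hhc hz₀ hε hmb
  exact ⟨hp1, part2 ε a b z₀ h t hε hab hhc hz₀ htc hta htb hmb hp1⟩
end

section
/- Let ε > 0 and a ≠ b be real numbers, and let t : ℍ → ℝ be a bounded harmonic function which extends continuously to ℍ ∪ (−ε, 0) ∪ (0, ε), with t ≡ a on (−ε, 0) and t ≡ b on (0, ε). Let t* : ℍ → ℝ be a harmonic conjugate of t (i.e., t + i t* is holomorphic on ℍ). Then |t*(w)| → ∞ as w → 0 within ℍ; i.e., the height function of the conjugate zero mean curvature surface diverges at the point corresponding to the isotropic line. -/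
open Complex Set Function Filter Topology

notation "Complex.abs" => @Norm.norm ℂ _

theorem Complex.norm_eq_abs (z : ℂ) : ‖z‖ = Complex.abs z := rfl

theorem Complex.continuous_abs : Continuous (fun z : ℂ => Complex.abs z) := continuous_norm

lemma maxmod_frontier {U : Set ℂ} (hUo : IsOpen U) (hUc : IsPreconnected U)
    (hUb : Bornology.IsBounded U) {F : ℂ → ℂ}
    (hF : DifferentiableOn ℂ F U)
    (hb : ∀ ζ ∈ frontier U, ∀ c : ℝ, 1 < c → ∀ᶠ w in 𝓝[U] ζ, Complex.abs (F w) ≤ c)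
    {w : ℂ} (hw : w ∈ U) : Complex.abs (F w) ≤ 1 := by
  have key : ∀ c : ℝ, 1 < c → ∀ x ∈ U, Complex.abs (F x) < c := by
    intro c hc
    set S := {x | x ∈ U ∧ c ≤ Complex.abs (F x)} with hS
    have hSU : S ⊆ U := fun x hx => hx.1
    have hScl : IsClosed S := by
      rw [← closure_subset_iff_isClosed]
      intro ζ hζ
      have hne : (𝓝[S] ζ).NeBot := mem_closure_iff_nhdsWithin_neBot.1 hζ
      have hζU' : ζ ∈ closure U := closure_mono hSU hζ
      by_cases hU : ζ ∈ U
      · have hcont : ContinuousWithinAt (fun x => Complex.abs (F x)) S ζ :=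
          (Complex.continuous_abs.continuousAt.comp
            (hF.continuousOn.continuousAt (hUo.mem_nhds hU))).continuousWithinAt
        refine ⟨hU, ge_of_tendsto hcont.tendsto ?_⟩
        filter_upwards [self_mem_nhdsWithin] with x hx using hx.2
      · exfalso
        have hfr : ζ ∈ frontier U := by
          rw [hUo.frontier_eq]; exact ⟨hζU', hU⟩
        have hev := hb ζ hfr ((1 + c) / 2) (by linarith)
        have hev' : ∀ᶠ x in 𝓝[S] ζ, Complex.abs (F x) ≤ (1 + c) / 2 :=
          (nhdsWithin_mono ζ hSU) hev
        obtain ⟨x, hx1, hx2⟩ := (hev'.and self_mem_nhdsWithin).exists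
        have := hx2.2
        linarith
    by_contra hcon
    push_neg at hcon
    obtain ⟨x₀, hx₀U, hx₀⟩ := hcon
    have hSne : S.Nonempty := ⟨x₀, hx₀U, hx₀⟩
    have hScmp : IsCompact S := Metric.isCompact_of_isClosed_isBounded hScl (hUb.subset hSU)
    obtain ⟨z₀, hz₀S, hz₀max⟩ := hScmp.exists_isMaxOn hSne
      ((Complex.continuous_abs.comp_continuousOn (hF.continuousOn.mono hSU)))
    have hmax : IsMaxOn (norm ∘ F) U z₀ := by
      intro x hx
      by_cases hxS : x ∈ S
      · simpa [Complex.norm_eq_abs] using hz₀max hxS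
      · have : Complex.abs (F x) < c := by
          by_contra h; exact hxS ⟨hx, le_of_not_gt h⟩
        simp only [Complex.norm_eq_abs, comp_apply, mem_setOf_eq]
        exact le_trans this.le hz₀S.2
    have heq := Complex.norm_eqOn_of_isPreconnected_of_isMaxOn hUc hUo hF hz₀S.1 hmax
    -- frontier is nonempty
    have hfrne : (frontier U).Nonempty := by
      by_contra hfe
      rw [not_nonempty_iff_eq_empty] at hfe
      have hclopen : IsClopen U := isClopen_iff_frontier_eq_empty.mpr hfe
      have hUuniv : U = univ := hclopen.eq_univ ⟨z₀, hz₀S.1⟩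
      obtain ⟨R, hR⟩ := (Metric.isBounded_iff_subset_ball (0 : ℂ)).1 hUb
      have : ((|R| + 1 : ℝ) : ℂ) ∈ Metric.ball (0 : ℂ) R := hR (hUuniv ▸ mem_univ _)
      rw [Metric.mem_ball, dist_zero_right] at this
      simp only [Complex.norm_real, Real.norm_eq_abs, abs_abs] at this
      have h1 : |(|R| + 1)| = |R| + 1 := abs_of_pos (by positivity)
      rw [h1] at this
      have := le_abs_self R
      linarith
    obtain ⟨ζ, hζ⟩ := hfrne
    have hnb : (𝓝[U] ζ).NeBot := by
      rw [hUo.frontier_eq] at hζ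
      exact mem_closure_iff_nhdsWithin_neBot.1 hζ.1
    have hev := hb ζ hζ ((1 + c) / 2) (by linarith)
    obtain ⟨x, hx1, hx2⟩ := (hev.and self_mem_nhdsWithin).exists
    have hxe : Complex.abs (F x) = Complex.abs (F z₀) := by
      have := heq hx2; simpa [Complex.norm_eq_abs] using this
    have : c ≤ Complex.abs (F z₀) := hz₀S.2
    rw [← hxe] at this
    linarith
  by_contra h
  push_neg at h
  have := key ((1 + Complex.abs (F w)) / 2) (by linarith) w hw
  linarith


lemma uhp_open : IsOpen UHP := by
  have : UHP = Complex.im ⁻¹' (Set.Ioi 0) := rfl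
  rw [this]; exact isOpen_Ioi.preimage Complex.continuous_im

lemma zden_ne {d : ℝ} {w : ℂ} (hw : 0 < w.im) : (d:ℂ) - w ≠ 0 := by
  intro h
  have := congrArg Complex.im h
  simp at this
  linarith

lemma zmap_im {d : ℝ} {w : ℂ} (hw : 0 < w.im) :
    (((d:ℂ) + w) / ((d:ℂ) - w)).im = 2 * d * w.im / Complex.normSq ((d:ℂ) - w) := by
  have h0 : Complex.normSq ((d:ℂ) - w) ≠ 0 := (Complex.normSq_pos.2 (zden_ne hw)).ne'
  rw [Complex.div_im]
  simp only [Complex.add_im, Complex.add_re, Complex.sub_re, Complex.sub_im,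
    Complex.ofReal_re, Complex.ofReal_im]
  field_simp
  ring

lemma zmap_re {d : ℝ} {w : ℂ} (hw : 0 < w.im) :
    (((d:ℂ) + w) / ((d:ℂ) - w)).re =
      (d ^ 2 - (Complex.abs w) ^ 2) / Complex.normSq ((d:ℂ) - w) := by
  have h0 : Complex.normSq ((d:ℂ) - w) ≠ 0 := (Complex.normSq_pos.2 (zden_ne hw)).ne'
  rw [Complex.div_re]
  simp only [Complex.add_im, Complex.add_re, Complex.sub_re, Complex.sub_im,
    Complex.ofReal_re, Complex.ofReal_im, Complex.sq_norm, Complex.normSq_apply]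
  field_simp
  ring

lemma zmap_im_pos {d : ℝ} (hd : 0 < d) {w : ℂ} (hw : 0 < w.im) :
    0 < (((d:ℂ) + w) / ((d:ℂ) - w)).im := by
  rw [zmap_im hw]
  have h0 : 0 < Complex.normSq ((d:ℂ) - w) := Complex.normSq_pos.2 (zden_ne hw)
  positivity

lemma frontier_char {d : ℝ} (hd : 0 < d) {ζ : ℂ}
    (hζ : ζ ∈ frontier (UHP ∩ Metric.ball (0:ℂ) d)) :
    (ζ.im = 0 ∧ Complex.abs ζ ≤ d) ∨ (Complex.abs ζ = d ∧ 0 < ζ.im) := by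
  have hΩo : IsOpen (UHP ∩ Metric.ball (0:ℂ) d) := uhp_open.inter Metric.isOpen_ball
  rw [hΩo.frontier_eq] at hζ
  obtain ⟨hcl, hnot⟩ := hζ
  have him : 0 ≤ ζ.im := by
    have hsub : closure (UHP ∩ Metric.ball (0:ℂ) d) ⊆ {z : ℂ | 0 ≤ z.im} := by
      apply closure_minimal
      · exact fun z hz => (hz.1.le : (0:ℝ) ≤ z.im)
      · exact isClosed_Ici.preimage Complex.continuous_im
    exact hsub hcl
  have habs : Complex.abs ζ ≤ d := by
    have hsub : closure (UHP ∩ Metric.ball (0:ℂ) d) ⊆ Metric.closedBall (0:ℂ) d := by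
      refine closure_minimal (fun z hz => ?_) Metric.isClosed_closedBall
      exact Metric.ball_subset_closedBall hz.2
    have := hsub hcl
    rwa [Metric.mem_closedBall, dist_zero_right, Complex.norm_eq_abs] at this
  rcases eq_or_lt_of_le him with h0 | hpos
  · exact Or.inl ⟨h0.symm, habs⟩
  · right
    refine ⟨le_antisymm habs ?_, hpos⟩
    by_contra hlt
    push_neg at hlt
    exact hnot ⟨hpos, by rwa [Metric.mem_ball, dist_zero_right, Complex.norm_eq_abs]⟩

lemma re_le_barrier {d M₁ : ℝ} (hd0 : 0 < d) (hM₁ : 0 < M₁) {G : ℂ → ℂ}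
    (hG : DifferentiableOn ℂ G UHP)
    (hbd : ∀ w ∈ UHP, (G w).re ≤ M₁)
    (hlim : ∀ x : ℝ, x ≠ 0 → |x| ≤ d → Tendsto (fun w => (G w).re) (𝓝[UHP] (x:ℂ)) (𝓝 0)) :
    ∀ w ∈ UHP, Complex.abs w < d →
      (G w).re ≤ M₁ * (2 / Real.pi) * Complex.arg (((d:ℂ) + w) / ((d:ℂ) - w)) := by
  have hπ : (0:ℝ) < Real.pi := Real.pi_pos
  set Ω : Set ℂ := UHP ∩ Metric.ball (0:ℂ) d with hΩ
  have hΩo : IsOpen Ω := uhp_open.inter Metric.isOpen_ball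
  have hΩU : Ω ⊆ UHP := inter_subset_left
  have hΩconv : Convex ℝ Ω := by
    refine Convex.inter ?_ (convex_ball 0 d)
    exact convex_halfSpace_im_gt 0
  have hΩb : Bornology.IsBounded Ω := Metric.isBounded_ball.subset inter_subset_right
  -- the composite function
  set K : ℝ := M₁ * (2 / Real.pi) with hK
  have hKpos : 0 < K := by positivity
  intro w₀ hw₀ hw₀d
  have hw₀Ω : w₀ ∈ Ω := ⟨hw₀, by rwa [Metric.mem_ball, dist_zero_right, Complex.norm_eq_abs]⟩
  -- for each η > 0, apply the maximum principle
  have main : ∀ η : ℝ, 0 < η →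
      (G w₀).re ≤ K * Complex.arg (((d:ℂ) + w₀) / ((d:ℂ) - w₀))
        - η * Real.log (Complex.abs w₀ / d) := by
    intro η hη
    set Φ : ℂ → ℂ := fun w => Complex.exp (G w - (K:ℂ) * (-Complex.I *
      Complex.log (((d:ℂ) + w) / ((d:ℂ) - w))) + (η:ℂ) * Complex.log (w / (d:ℂ))) with hΦ
    have habsΦ : ∀ w ∈ UHP, Complex.abs (Φ w) =
        Real.exp ((G w).re - K * Complex.arg (((d:ℂ) + w) / ((d:ℂ) - w))
          + η * Real.log (Complex.abs w / d)) := by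
      intro w hw
      rw [hΦ, Complex.norm_exp]
      congr 1
      simp only [Complex.add_re, Complex.sub_re, Complex.re_ofReal_mul]
      rw [neg_mul, Complex.neg_re, Complex.mul_re]
      simp only [Complex.log_im, Complex.I_re, Complex.I_im]
      have hlogre : (Complex.log (w / (d:ℂ))).re = Real.log (Complex.abs w / d) := by
        rw [Complex.log_re, norm_div, Complex.norm_real, Real.norm_eq_abs, _root_.abs_of_pos hd0]
      rw [hlogre]
      ring
    -- differentiability of Φ on Ω
    have hzdiff : ∀ w ∈ Ω, DifferentiableAt ℂ (fun w : ℂ => ((d:ℂ) + w) / ((d:ℂ) - w)) w := by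
      intro w hw
      exact ((differentiableAt_const _).add differentiableAt_id).div
        ((differentiableAt_const _).sub differentiableAt_id) (zden_ne hw.1)
    have hdiff : DifferentiableOn ℂ Φ Ω := by
      intro w hw
      apply DifferentiableWithinAt.cexp
      apply DifferentiableWithinAt.add
      apply DifferentiableWithinAt.sub
      · exact (hG w (hΩU hw)).mono hΩU
      · apply DifferentiableWithinAt.const_mul
        apply DifferentiableWithinAt.const_mul
        apply DifferentiableAt.differentiableWithinAt
        apply DifferentiableAt.clog (hzdiff w hw)
        rw [Complex.mem_slitPlane_iff]
        exact Or.inr (zmap_im_pos hd0 hw.1).ne'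
      · apply DifferentiableWithinAt.const_mul
        apply DifferentiableAt.differentiableWithinAt
        apply DifferentiableAt.clog (differentiableAt_id.div_const _)
        rw [Complex.mem_slitPlane_iff]
        right
        simp only [id_eq]
        have : (w / (d:ℂ)).im = w.im / d := by
          rw [div_eq_mul_inv, ← Complex.ofReal_inv, Complex.mul_im]
          simp
          ring
        rw [this]
        exact (div_pos hw.1 hd0).ne'
    -- nonnegativity facts on Ω
    have hargnn : ∀ w ∈ Ω, 0 ≤ Complex.arg (((d:ℂ) + w) / ((d:ℂ) - w)) :=
      fun w hw => Complex.arg_nonneg_iff.2 (zmap_im_pos hd0 hw.1).le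
    have hlognp : ∀ w ∈ Ω, Real.log (Complex.abs w / d) ≤ 0 := by
      intro w hw
      apply Real.log_nonpos (by positivity)
      rw [div_le_one hd0]
      have := hw.2
      rw [Metric.mem_ball, dist_zero_right, Complex.norm_eq_abs] at this
      exact this.le
    -- boundary bound
    have hbound : ∀ ζ ∈ frontier Ω, ∀ c : ℝ, 1 < c →
        ∀ᶠ w in 𝓝[Ω] ζ, Complex.abs (Φ w) ≤ c := by
      intro ζ hζ c hc
      have hlc : 0 < Real.log c := Real.log_pos hc
      rcases frontier_char hd0 hζ with ⟨him0, habsle⟩ | ⟨habs, him⟩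
      · rcases eq_or_ne ζ 0 with rfl | hζ0
        · -- ζ = 0 : the puncture
          have habs0 : Tendsto (fun w : ℂ => Complex.abs w) (𝓝[Ω] 0) (𝓝 0) := by
            have h0 : Tendsto (fun w : ℂ => Complex.abs w) (𝓝 0) (𝓝 0) := by
              simpa using Complex.continuous_abs.tendsto (0 : ℂ)
            exact h0.mono_left nhdsWithin_le_nhds
          have hev : ∀ᶠ w in 𝓝[Ω] (0:ℂ), Complex.abs w < d * Real.exp (-(M₁ / η)) :=
            habs0.eventually_lt_const (by positivity)
          filter_upwards [hev, self_mem_nhdsWithin] with w hw hwΩ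
          rw [habsΦ w (hΩU hwΩ)]
          have h1 : (G w).re ≤ M₁ := hbd w (hΩU hwΩ)
          have h2 : 0 ≤ K * Complex.arg (((d:ℂ) + w) / ((d:ℂ) - w)) :=
            mul_nonneg hKpos.le (hargnn w hwΩ)
          have hwne : w ≠ 0 := by
            intro h
            have := hwΩ.1
            rw [h] at this
            simp [UHP] at this
          have habsw : 0 < Complex.abs w := norm_pos_iff.mpr hwne
          have h3 : Real.log (Complex.abs w / d) < -(M₁ / η) := by
            rw [show -(M₁ / η) = Real.log (Real.exp (-(M₁ / η))) from (Real.log_exp _).symm]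
            apply Real.log_lt_log (by positivity)
            rw [div_lt_iff₀ hd0]
            linarith [hw]
          have h4 : η * Real.log (Complex.abs w / d) < η * (-(M₁ / η)) :=
            mul_lt_mul_of_pos_left h3 hη
          have h5 : η * (-(M₁ / η)) = -M₁ := by field_simp
          have hle : (G w).re - K * Complex.arg (((d:ℂ) + w) / ((d:ℂ) - w))
              + η * Real.log (Complex.abs w / d) ≤ 0 := by linarith
          exact le_trans (Real.exp_le_one_iff.2 hle) hc.le
        · -- ζ a nonzero real point
          set x := ζ.re with hx
          have hζx : ζ = (x:ℂ) := Complex.ext rfl (by simp [him0])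
          have hx0 : x ≠ 0 := by
            intro h
            apply hζ0
            rw [hζx, h, Complex.ofReal_zero]
          have hxd : |x| ≤ d := by
            rw [hζx, Complex.norm_real, Real.norm_eq_abs] at habsle
            exact habsle
          have htd : Tendsto (fun w => (G w).re) (𝓝[Ω] ((x:ℝ):ℂ)) (𝓝 0) :=
            (hlim x hx0 hxd).mono_left (nhdsWithin_mono _ hΩU)
          rw [hζx]
          have hev : ∀ᶠ w in 𝓝[Ω] ((x:ℝ):ℂ), (G w).re < Real.log c :=
            htd.eventually_lt_const hlc
          filter_upwards [hev, self_mem_nhdsWithin] with w hw1 hwΩ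
          rw [habsΦ w (hΩU hwΩ)]
          have h2 : 0 ≤ K * Complex.arg (((d:ℂ) + w) / ((d:ℂ) - w)) :=
            mul_nonneg hKpos.le (hargnn w hwΩ)
          have h3 : η * Real.log (Complex.abs w / d) ≤ 0 :=
            mul_nonpos_of_nonneg_of_nonpos hη.le (hlognp w hwΩ)
          have hle : (G w).re - K * Complex.arg (((d:ℂ) + w) / ((d:ℂ) - w))
              + η * Real.log (Complex.abs w / d) ≤ Real.log c := by linarith
          calc Real.exp _ ≤ Real.exp (Real.log c) := Real.exp_le_exp.2 hle
            _ = c := Real.exp_log (by linarith)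
      · -- ζ on the circular arc
        have hne : ((d:ℂ) - ζ) ≠ 0 := zden_ne him
        have hzc : ContinuousAt (fun w : ℂ => ((d:ℂ) + w) / ((d:ℂ) - w)) ζ :=
          ContinuousAt.div (by fun_prop) (by fun_prop) hne
        have hslit : (((d:ℂ) + ζ) / ((d:ℂ) - ζ)) ∈ Complex.slitPlane := by
          rw [Complex.mem_slitPlane_iff]
          exact Or.inr (zmap_im_pos hd0 him).ne'
        have harval : Complex.arg (((d:ℂ) + ζ) / ((d:ℂ) - ζ)) = Real.pi / 2 := by
          rw [Complex.arg_eq_pi_div_two_iff]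
          refine ⟨?_, zmap_im_pos hd0 him⟩
          rw [zmap_re him, habs]
          simp
        have hargcont : Tendsto (fun w : ℂ => Complex.arg (((d:ℂ) + w) / ((d:ℂ) - w)))
            (𝓝 ζ) (𝓝 (Real.pi / 2)) := by
          have h : ContinuousAt (Complex.arg ∘ fun w : ℂ => ((d:ℂ) + w) / ((d:ℂ) - w)) ζ :=
            ContinuousAt.comp (x := ζ) (f := fun w : ℂ => ((d:ℂ) + w) / ((d:ℂ) - w))
              (Complex.continuousAt_arg hslit) hzc
          rw [ContinuousAt] at h
          simpa [Function.comp_def, harval] using h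
        set β := Real.log c / K with hβdef
        have hβ : 0 < β := div_pos hlc hKpos
        have hev : ∀ᶠ w in 𝓝[Ω] ζ, Real.pi / 2 - β <
            Complex.arg (((d:ℂ) + w) / ((d:ℂ) - w)) :=
          (hargcont.mono_left nhdsWithin_le_nhds).eventually_const_lt (by linarith)
        filter_upwards [hev, self_mem_nhdsWithin] with w hw1 hwΩ
        rw [habsΦ w (hΩU hwΩ)]
        have h1 : (G w).re ≤ M₁ := hbd w (hΩU hwΩ)
        have h3 : η * Real.log (Complex.abs w / d) ≤ 0 :=
          mul_nonpos_of_nonneg_of_nonpos hη.le (hlognp w hwΩ)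
        have h4 : K * (Real.pi / 2 - β) < K * Complex.arg (((d:ℂ) + w) / ((d:ℂ) - w)) :=
          mul_lt_mul_of_pos_left hw1 hKpos
        have h5 : K * (Real.pi / 2) = M₁ := by
          rw [hK]
          field_simp
        have h6 : K * β = Real.log c := by
          rw [hβdef]
          field_simp
        have hle : (G w).re - K * Complex.arg (((d:ℂ) + w) / ((d:ℂ) - w))
            + η * Real.log (Complex.abs w / d) ≤ Real.log c := by nlinarith
        calc Real.exp _ ≤ Real.exp (Real.log c) := Real.exp_le_exp.2 hle
          _ = c := Real.exp_log (by linarith)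
    -- apply the maximum principle
    have hmax := maxmod_frontier hΩo hΩconv.isPreconnected hΩb hdiff hbound hw₀Ω
    rw [habsΦ w₀ hw₀] at hmax
    have hexp := Real.exp_le_one_iff.1 hmax
    linarith
  -- let η → 0
  have hB : 0 ≤ -Real.log (Complex.abs w₀ / d) := by
    have : Real.log (Complex.abs w₀ / d) ≤ 0 := by
      apply Real.log_nonpos (by positivity)
      rw [div_le_one hd0]
      exact hw₀d.le
    linarith
  set B := -Real.log (Complex.abs w₀ / d) with hBdef
  by_contra hcon
  push_neg at hcon
  set δ := (G w₀).re - K * Complex.arg (((d:ℂ) + w₀) / ((d:ℂ) - w₀)) with hδdef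
  have hδ : 0 < δ := by
    rw [hδdef]
    linarith
  have hmain := main (δ / (B + 1)) (by positivity)
  have hlt : (δ / (B + 1)) * B < δ := by
    rw [div_mul_eq_mul_div, div_lt_iff₀ (by linarith)]
    nlinarith
  have hX : -((δ / (B + 1)) * Real.log (Complex.abs w₀ / d)) = (δ / (B + 1)) * B := by
    rw [hBdef]; ring
  linarith [hmain, hlt, hX]

lemma arg_le_im {d : ℝ} (hd0 : 0 < d) {w : ℂ} (hw : 0 < w.im)
    (habs : Complex.abs w ≤ d / 2) :
    Complex.arg (((d:ℂ) + w) / ((d:ℂ) - w)) ≤ 8 / (3 * d) * w.im := by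
  set z := ((d:ℂ) + w) / ((d:ℂ) - w) with hz
  have hA : 0 ≤ Complex.abs w := norm_nonneg w
  have hnsq : 0 < Complex.normSq ((d:ℂ) - w) := Complex.normSq_pos.2 (zden_ne hw)
  have hd2 : (Complex.abs w) ^ 2 ≤ d ^ 2 / 4 := by nlinarith
  have hre : 0 < z.re := by
    rw [hz, zmap_re hw]
    apply div_pos (by nlinarith) hnsq
  have him : 0 < z.im := zmap_im_pos hd0 hw
  have h0 : 0 ≤ Complex.arg z := Complex.arg_nonneg_iff.2 him.le
  have hratio : z.im / z.re = 2 * d * w.im / (d ^ 2 - (Complex.abs w) ^ 2) := by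
    rw [hz, zmap_im hw, zmap_re hw]
    rw [div_div_div_cancel_right₀]
    exact hnsq.ne'
  have hargle : Complex.arg z ≤ z.im / z.re := by
    rcases eq_or_lt_of_le h0 with h | h
    · rw [← h]; positivity
    · have hlt : Complex.arg z < Real.pi / 2 := by
        have := Complex.abs_arg_lt_pi_div_two_iff.2 (Or.inl hre)
        exact lt_of_le_of_lt (le_abs_self _) this
      have := Real.lt_tan h hlt
      rw [Complex.tan_arg] at this
      exact this.le
  refine le_trans hargle ?_
  rw [hratio, div_le_iff₀ (by nlinarith)]
  have h1 : (3/4 : ℝ) * d^2 ≤ d^2 - (Complex.abs w)^2 := by nlinarith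
  have hcoef : 0 ≤ 8 / (3*d) * w.im := by positivity
  have h2 := mul_le_mul_of_nonneg_left h1 hcoef
  have h3 : 8 / (3*d) * w.im * ((3/4 : ℝ) * d^2) = 2 * d * w.im := by
    field_simp
    ring
  linarith

lemma deriv_bound {r C₁ : ℝ} (hr0 : 0 < r) (hC₁ : 0 < C₁) {g : ℂ → ℂ}
    (hg : DifferentiableOn ℂ g UHP)
    (hre : ∀ w ∈ UHP, Complex.abs w < r → |(g w).re| ≤ C₁ * w.im) :
    ∀ w ∈ UHP, Complex.abs w < r / 2 → Complex.abs (deriv g w) ≤ 81 * C₁ := by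
  intro w hw hwr
  have hy : 0 < w.im := hw
  have hyabs : w.im ≤ Complex.abs w := le_trans (le_abs_self _) (Complex.abs_im_le_norm w)
  set ρ : ℝ := w.im / 2 with hρdef
  have hρ : 0 < ρ := by positivity
  have hball : Metric.ball w ρ ⊆ UHP ∩ {z : ℂ | Complex.abs z < r} := by
    intro z hz
    rw [Metric.mem_ball, dist_eq_norm, Complex.norm_eq_abs] at hz
    have him : |z.im - w.im| ≤ Complex.abs (z - w) := by
      have := Complex.abs_im_le_norm (z - w)
      simpa using this
    have h1 : 0 < z.im := by
      have := abs_le.1 him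
      linarith [this.1]
    have h2 : Complex.abs z < r := by
      have h3 : Complex.abs z ≤ Complex.abs w + Complex.abs (z - w) := by
        have := norm_add_le (z - w) w
        rw [sub_add_cancel] at this
        linarith
      have : Complex.abs z < Complex.abs w + ρ := by linarith
      have hρr : ρ ≤ r / 4 := by
        rw [hρdef]
        linarith [le_trans hyabs hwr.le]
      linarith
    exact ⟨h1, h2⟩
  set R : ℝ := 3 / 2 * C₁ * w.im with hRdef
  have hR : 0 < R := by positivity
  have hRre : ∀ z ∈ Metric.ball w ρ, |(g z).re| ≤ R := by
    intro z hz
    obtain ⟨h1, h2⟩ := hball hz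
    have := hre z h1 h2
    rw [Metric.mem_ball, dist_eq_norm, Complex.norm_eq_abs] at hz
    have him : |z.im - w.im| ≤ Complex.abs (z - w) := by
      simpa using Complex.abs_im_le_norm (z - w)
    have : z.im ≤ w.im + ρ := by
      have := (abs_le.1 him).2
      linarith
    have hzim : z.im ≤ 3 / 2 * w.im := by
      rw [hρdef] at this; linarith
    calc |(g z).re| ≤ C₁ * z.im := hre z h1 h2
      _ ≤ C₁ * (3 / 2 * w.im) := by
          apply mul_le_mul_of_nonneg_left hzim hC₁.le
      _ = R := by rw [hRdef]; ring
  set c : ℂ := ((R⁻¹ : ℝ) : ℂ) with hcdef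
  set h : ℂ → ℂ := fun z => Complex.exp (c * g z) with hhdef
  have hUball : Metric.ball w ρ ⊆ UHP := fun z hz => (hball hz).1
  have hhd : DifferentiableOn ℂ h (Metric.ball w ρ) := by
    intro z hz
    exact (((hg z (hUball hz)).mono hUball).const_mul c).cexp
  have habsh : ∀ z ∈ Metric.ball w ρ, Complex.abs (h z) ≤ Real.exp 1 := by
    intro z hz
    rw [hhdef, Complex.norm_exp]
    apply Real.exp_le_exp.2
    rw [hcdef, Complex.re_ofReal_mul]
    calc R⁻¹ * (g z).re ≤ R⁻¹ * |(g z).re| := by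
          apply mul_le_mul_of_nonneg_left (le_abs_self _) (by positivity)
      _ ≤ R⁻¹ * R := mul_le_mul_of_nonneg_left (hRre z hz) (by positivity)
      _ = 1 := inv_mul_cancel₀ hR.ne'
  have hmaps : Set.MapsTo h (Metric.ball w ρ) (Metric.ball (h w) (2 * Real.exp 1 + 1)) := by
    intro z hz
    rw [Metric.mem_ball, dist_eq_norm, Complex.norm_eq_abs]
    have h1 := habsh z hz
    have h2 := habsh w (Metric.mem_ball_self hρ)
    have := norm_sub_le (h z) (h w)
    have hexp1 : (0:ℝ) < Real.exp 1 := Real.exp_pos 1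
    calc Complex.abs (h z - h w) ≤ Complex.abs (h z) + Complex.abs (h w) :=
          norm_sub_le _ _
      _ < 2 * Real.exp 1 + 1 := by linarith
  have hderivh := Complex.norm_deriv_le_div_of_mapsTo_ball hhd (hmaps.mono_right Metric.ball_subset_closedBall) hρ
  -- compute deriv h w
  have hgw : HasDerivAt g (deriv g w) w :=
    ((hg w hw).differentiableAt (uhp_open.mem_nhds hw)).hasDerivAt
  have hhw : HasDerivAt h (Complex.exp (c * g w) * (c * deriv g w)) w :=
    (hgw.const_mul c).cexp
  rw [hhw.deriv] at hderivh
  rw [Complex.norm_eq_abs, norm_mul, norm_mul, Complex.norm_exp] at hderivh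
  have hlow : Real.exp (-1) ≤ Real.exp ((c * g w).re) := by
    apply Real.exp_le_exp.2
    rw [hcdef, Complex.re_ofReal_mul]
    have h1 : |(g w).re| ≤ R := hRre w (Metric.mem_ball_self hρ)
    have h2 : -(R⁻¹ * R) ≤ R⁻¹ * (g w).re := by
      have := neg_abs_le (g w).re
      have h3 : R⁻¹ * (-|(g w).re|) ≤ R⁻¹ * (g w).re :=
        mul_le_mul_of_nonneg_left this (by positivity)
      have h4 : R⁻¹ * (-R) ≤ R⁻¹ * (-|(g w).re|) := by
        apply mul_le_mul_of_nonneg_left (by linarith) (by positivity)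
      linarith
    rw [inv_mul_cancel₀ hR.ne'] at h2
    linarith
  have habsc : Complex.abs c = R⁻¹ := by
    rw [hcdef, Complex.norm_real, Real.norm_eq_abs, abs_of_pos (by positivity)]
  rw [habsc] at hderivh
  -- now: exp((c g w).re) * (R⁻¹ * abs (deriv g w)) ≤ (2 e + 1)/ρ
  have hexp1 : Real.exp 1 < 3 := by
    have := Real.exp_one_lt_d9
    linarith
  have hstep : Real.exp (-1) * (R⁻¹ * Complex.abs (deriv g w)) ≤ (2 * Real.exp 1 + 1) / ρ := by
    calc Real.exp (-1) * (R⁻¹ * Complex.abs (deriv g w))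
        ≤ Real.exp ((c * g w).re) * (R⁻¹ * Complex.abs (deriv g w)) := by
          apply mul_le_mul_of_nonneg_right hlow (by positivity)
      _ ≤ (2 * Real.exp 1 + 1) / ρ := hderivh
  have hρR : R / ρ = 3 * C₁ := by
    rw [hRdef, hρdef]
    field_simp
  -- abs (deriv g w) ≤ exp 1 * R * (2 exp 1 + 1)/ρ
  have hfinal : Complex.abs (deriv g w) ≤ Real.exp 1 * (2 * Real.exp 1 + 1) * (R / ρ) := by
    have he : Real.exp (-1) = (Real.exp 1)⁻¹ := by
      rw [← Real.exp_neg]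
    rw [he] at hstep
    have hepos : (0:ℝ) < Real.exp 1 := Real.exp_pos 1
    have h2 := mul_le_mul_of_nonneg_left hstep (le_of_lt (mul_pos hepos hR))
    -- (e * R) * (e⁻¹ * (R⁻¹ * abs)) = abs
    have hid : Real.exp 1 * R * ((Real.exp 1)⁻¹ * (R⁻¹ * Complex.abs (deriv g w)))
        = Complex.abs (deriv g w) := by
      field_simp
    rw [hid] at h2
    calc Complex.abs (deriv g w) ≤ Real.exp 1 * R * ((2 * Real.exp 1 + 1) / ρ) := h2
      _ = Real.exp 1 * (2 * Real.exp 1 + 1) * (R / ρ) := by ring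
  rw [hρR] at hfinal
  have h9 : Real.exp 1 * (2 * Real.exp 1 + 1) ≤ 21 := by nlinarith [hexp1, Real.exp_pos 1]
  have h10 : Real.exp 1 * (2 * Real.exp 1 + 1) * (3 * C₁) ≤ 21 * (3 * C₁) :=
    mul_le_mul_of_nonneg_right h9 (by positivity)
  linarith

lemma osc_bound {r C₂ : ℝ} (hC₂ : 0 ≤ C₂) {g : ℂ → ℂ}
    (hg : DifferentiableOn ℂ g UHP)
    (hd : ∀ w ∈ UHP, Complex.abs w < r → Complex.abs (deriv g w) ≤ C₂) :
    ∀ w ∈ UHP, Complex.abs w < r → ∀ z ∈ UHP, Complex.abs z < r →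
      Complex.abs (g w - g z) ≤ C₂ * Complex.abs (w - z) := by
  set s : Set ℂ := UHP ∩ Metric.ball 0 r with hs
  have hso : IsOpen s := uhp_open.inter Metric.isOpen_ball
  have hconv : Convex ℝ s := (convex_halfSpace_im_gt 0).inter (convex_ball 0 r)
  have hdiff : ∀ x ∈ s, DifferentiableAt ℂ g x := fun x hx =>
    (hg x hx.1).differentiableAt (uhp_open.mem_nhds hx.1)
  have hbound : ∀ x ∈ s, ‖fderiv ℂ g x‖ ≤ C₂ := by
    intro x hx
    have hD := hdiff x hx
    have hfd : fderiv ℂ g x = ContinuousLinearMap.smulRight (1 : ℂ →L[ℂ] ℂ) (deriv g x) :=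
      hD.hasDerivAt.hasFDerivAt.fderiv
    rw [hfd, ContinuousLinearMap.norm_smulRight_apply]
    have h1 : ‖(1 : ℂ →L[ℂ] ℂ)‖ = 1 := ContinuousLinearMap.norm_id
    rw [h1, one_mul, Complex.norm_eq_abs]
    apply hd x hx.1
    have := hx.2
    rwa [Metric.mem_ball, dist_zero_right, Complex.norm_eq_abs] at this
  intro w hw hwr z hz hzr
  have hws : w ∈ s := ⟨hw, by rwa [Metric.mem_ball, dist_zero_right, Complex.norm_eq_abs]⟩
  have hzs : z ∈ s := ⟨hz, by rwa [Metric.mem_ball, dist_zero_right, Complex.norm_eq_abs]⟩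
  have := hconv.norm_image_sub_le_of_norm_fderiv_le hdiff hbound hzs hws
  simpa [Complex.norm_eq_abs] using this

/-- **Divergence of the conjugate height function at an isotropic line.**
If `t` is bounded harmonic on `ℍ`, continuous up to `(-ε,0) ∪ (0,ε)` with `t ≡ a` on
`(-ε,0)` and `t ≡ b` on `(0,ε)` where `a ≠ b`, and `t*` is a harmonic conjugate of `t`
(i.e. `t + i t*` is holomorphic on `ℍ`), then `|t*(w)| → ∞` as `w → 0` within `ℍ`:
the height function of the conjugate zero mean curvature surface diverges at the point
corresponding to the isotropic line. -/
theorem conjugate_height_diverges_at_isotropic_line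
    (ε : ℝ) (hε : 0 < ε) (a b : ℝ) (hab : a ≠ b)
    (t tstar : ℂ → ℝ)
    (ht : HarmonicOn t UHP)
    (htbd : ∃ M : ℝ, ∀ w ∈ UHP, |t w| ≤ M)
    (htc : ContinuousOn t
      (UHP ∪ (Complex.ofReal '' (Set.Ioo (-ε) 0 ∪ Set.Ioo 0 ε))))
    (hta : ∀ s ∈ Set.Ioo (-ε) 0, t (s : ℂ) = a)
    (htb : ∀ s ∈ Set.Ioo 0 ε, t (s : ℂ) = b)
    (hconj : DifferentiableOn ℂ
      (fun w => (t w : ℂ) + Complex.I * (tstar w : ℂ)) UHP) :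
    Tendsto (fun w => |tstar w|) (𝓝[UHP] 0) atTop := by
  obtain ⟨M, hM⟩ := htbd
  have hπ : (0:ℝ) < Real.pi := Real.pi_pos
  have hIuhp : Complex.I ∈ UHP := by simp [UHP]
  have hM0 : 0 ≤ M := le_trans (abs_nonneg _) (hM Complex.I hIuhp)
  set d : ℝ := ε / 2 with hddef
  have hd0 : 0 < d := by positivity
  set c₀ : ℝ := (b - a) / Real.pi with hc₀def
  have hc₀ : c₀ ≠ 0 := div_ne_zero (sub_ne_zero.2 (Ne.symm hab)) hπ.ne'
  set f : ℂ → ℂ := fun w => (t w : ℂ) + Complex.I * (tstar w : ℂ) with hfdef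
  set p : ℂ → ℂ := fun w => (b:ℂ) + (c₀:ℂ) * (Complex.I * Complex.log w) with hpdef
  set g : ℂ → ℂ := fun w => f w - p w with hgdef
  -- real and imaginary parts of g
  have hgre : ∀ w : ℂ, (g w).re = t w - b + c₀ * Complex.arg w := by
    intro w
    simp only [hgdef, hfdef, hpdef, Complex.sub_re, Complex.add_re, Complex.ofReal_re,
      Complex.mul_re, Complex.I_re, Complex.I_im, Complex.ofReal_im, Complex.re_ofReal_mul,
      Complex.log_re, Complex.log_im]
    ring
  have hgim : ∀ w : ℂ, (g w).im = tstar w - c₀ * Real.log (Complex.abs w) := by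
    intro w
    simp only [hgdef, hfdef, hpdef, Complex.sub_im, Complex.add_im, Complex.ofReal_im,
      Complex.mul_im, Complex.I_re, Complex.I_im, Complex.ofReal_re, Complex.im_ofReal_mul,
      Complex.log_re, Complex.log_im]
    ring
  -- differentiability of g
  have hpdiff : DifferentiableOn ℂ p UHP := by
    intro w hw
    apply DifferentiableWithinAt.add (differentiableWithinAt_const _)
    apply DifferentiableWithinAt.const_mul
    apply DifferentiableWithinAt.const_mul
    apply DifferentiableAt.differentiableWithinAt
    apply Complex.differentiableAt_log
    rw [Complex.mem_slitPlane_iff]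
    exact Or.inr (ne_of_gt hw)
  have hgdiff : DifferentiableOn ℂ g UHP := hconj.sub hpdiff
  -- bound on re g
  set M₁ : ℝ := M + |a| + |b| + |b - a| + 1 with hM₁def
  have hM₁ : 0 < M₁ := by positivity
  have hreabs : ∀ w ∈ UHP, |(g w).re| ≤ M₁ - 1 := by
    intro w hw
    rw [hgre w]
    have h1 : |t w| ≤ M := hM w hw
    have h2 : |c₀ * Complex.arg w| ≤ |b - a| := by
      rw [abs_mul, hc₀def, abs_div, abs_of_pos hπ]
      calc |b - a| / Real.pi * |Complex.arg w| ≤ |b - a| / Real.pi * Real.pi := by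
            apply mul_le_mul_of_nonneg_left (Complex.abs_arg_le_pi w) (by positivity)
        _ = |b - a| := div_mul_cancel₀ _ hπ.ne'
    have h1' := abs_le.1 h1
    have h2' := abs_le.1 h2
    have h3 := le_abs_self b
    have h4 := neg_abs_le b
    have h5 : (0:ℝ) ≤ |a| := abs_nonneg a
    rw [abs_le]
    constructor
    · rw [hM₁def]; linarith [h1'.1, h2'.1]
    · rw [hM₁def]; linarith [h1'.2, h2'.2]
  have hbd₁ : ∀ w ∈ UHP, (g w).re ≤ M₁ := fun w hw =>
    le_trans (le_abs_self _) (le_trans (hreabs w hw) (by linarith))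
  have hbd₂ : ∀ w ∈ UHP, ((-g) w).re ≤ M₁ := by
    intro w hw
    simp only [Pi.neg_apply, Complex.neg_re]
    exact le_trans (neg_le_abs _) (le_trans (hreabs w hw) (by linarith))
  -- boundary limits
  have hlim : ∀ x : ℝ, x ≠ 0 → |x| ≤ d → Tendsto (fun w => (g w).re) (𝓝[UHP] (x:ℂ)) (𝓝 0) := by
    intro x hx0 hxd
    have hxε : |x| < ε := lt_of_le_of_lt hxd (by rw [hddef]; linarith)
    have hxS : (x:ℂ) ∈ UHP ∪ (Complex.ofReal '' (Set.Ioo (-ε) 0 ∪ Set.Ioo 0 ε)) := by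
      right
      refine ⟨x, ?_, rfl⟩
      rcases lt_or_gt_of_ne hx0 with h | h
      · exact Or.inl ⟨by cases' abs_lt.1 hxε with h1 h2; linarith, h⟩
      · exact Or.inr ⟨h, by cases' abs_lt.1 hxε with h1 h2; linarith⟩
    have htt : Tendsto t (𝓝[UHP] (x:ℂ)) (𝓝 (t (x:ℂ))) :=
      ((htc (x:ℂ) hxS).mono subset_union_left).tendsto
    rcases lt_or_gt_of_ne hx0 with hneg | hpos
    · -- x < 0
      have htx : t (x:ℂ) = a := hta x ⟨by cases' abs_lt.1 hxε with h1 h2; linarith, hneg⟩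
      have harg : Tendsto Complex.arg (𝓝[UHP] (x:ℂ)) (𝓝 Real.pi) := by
        have h := Complex.tendsto_arg_nhdsWithin_im_nonneg_of_re_neg_of_im_zero
          (show ((x:ℂ)).re < 0 by simpa using hneg) (by simp)
        exact h.mono_left (nhdsWithin_mono _ (fun z (hz : 0 < z.im) => hz.le))
      have hcomb : Tendsto (fun w => t w - b + c₀ * Complex.arg w) (𝓝[UHP] (x:ℂ))
          (𝓝 (a - b + c₀ * Real.pi)) := by
        rw [htx] at htt
        exact (htt.sub_const b).add (harg.const_mul c₀)
      have hval : a - b + c₀ * Real.pi = 0 := by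
        rw [hc₀def, div_mul_cancel₀ _ hπ.ne']
        ring
      rw [hval] at hcomb
      exact hcomb.congr (fun w => (hgre w).symm)
    · -- x > 0
      have htx : t (x:ℂ) = b := htb x ⟨hpos, by cases' abs_lt.1 hxε with h1 h2; linarith⟩
      have harg : Tendsto Complex.arg (𝓝[UHP] (x:ℂ)) (𝓝 0) := by
        have hsl : ((x:ℂ)) ∈ Complex.slitPlane := by
          rw [Complex.mem_slitPlane_iff]
          exact Or.inl (by simpa using hpos)
        have h := (Complex.continuousAt_arg hsl).tendsto
        rw [Complex.arg_ofReal_of_nonneg hpos.le] at h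
        exact h.mono_left nhdsWithin_le_nhds
      have hcomb : Tendsto (fun w => t w - b + c₀ * Complex.arg w) (𝓝[UHP] (x:ℂ))
          (𝓝 (b - b + c₀ * 0)) := by
        rw [htx] at htt
        exact (htt.sub_const b).add (harg.const_mul c₀)
      have hval : b - b + c₀ * 0 = 0 := by ring
      rw [hval] at hcomb
      exact hcomb.congr (fun w => (hgre w).symm)
  have hlimneg : ∀ x : ℝ, x ≠ 0 → |x| ≤ d →
      Tendsto (fun w => ((-g) w).re) (𝓝[UHP] (x:ℂ)) (𝓝 0) := by
    intro x hx0 hxd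
    have := (hlim x hx0 hxd).neg
    rw [neg_zero] at this
    exact this.congr (fun w => by simp)
  -- apply the barrier bound
  have hup := re_le_barrier hd0 hM₁ hgdiff hbd₁ hlim
  have hdown := re_le_barrier hd0 hM₁ hgdiff.neg hbd₂ hlimneg
  set C₁ : ℝ := M₁ * (2 / Real.pi) * (8 / (3 * d)) with hC₁def
  have hC₁ : 0 < C₁ := by positivity
  have hre_lin : ∀ w ∈ UHP, Complex.abs w < d / 2 → |(g w).re| ≤ C₁ * w.im := by
    intro w hw hwd
    have hwd' : Complex.abs w < d := lt_trans hwd (by linarith)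
    have hargle := arg_le_im hd0 hw hwd.le
    have hK : 0 ≤ M₁ * (2 / Real.pi) := by positivity
    have h1 : (g w).re ≤ C₁ * w.im := by
      calc (g w).re ≤ M₁ * (2 / Real.pi) * Complex.arg (((d:ℂ) + w) / ((d:ℂ) - w)) :=
            hup w hw hwd'
        _ ≤ M₁ * (2 / Real.pi) * (8 / (3 * d) * w.im) := mul_le_mul_of_nonneg_left hargle hK
        _ = C₁ * w.im := by rw [hC₁def]; ring
    have h2 : -(g w).re ≤ C₁ * w.im := by
      calc -(g w).re = ((-g) w).re := by simp
        _ ≤ M₁ * (2 / Real.pi) * Complex.arg (((d:ℂ) + w) / ((d:ℂ) - w)) := hdown w hw hwd'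
        _ ≤ M₁ * (2 / Real.pi) * (8 / (3 * d) * w.im) := mul_le_mul_of_nonneg_left hargle hK
        _ = C₁ * w.im := by rw [hC₁def]; ring
    rw [abs_le]
    exact ⟨by linarith, h1⟩
  -- derivative bound on abs w < d/4
  have hderiv := deriv_bound (by positivity : (0:ℝ) < d / 2) hC₁ hgdiff hre_lin
  -- oscillation bound on abs w < d/4
  have hosc := osc_bound (by positivity : (0:ℝ) ≤ 81 * C₁) hgdiff
    (fun w hw hwd => hderiv w hw hwd)
  -- reference point
  set w₀ : ℂ := ((d/8 : ℝ) : ℂ) * Complex.I with hw₀def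
  have hw₀im : w₀.im = d/8 := by simp [hw₀def]
  have hw₀U : w₀ ∈ UHP := by
    show 0 < w₀.im
    rw [hw₀im]; positivity
  have hw₀abs : Complex.abs w₀ = d/8 := by
    rw [hw₀def, norm_mul, Complex.norm_I, Complex.norm_real, Real.norm_eq_abs, mul_one, abs_of_pos (by positivity)]
  have hw₀r : Complex.abs w₀ < d/2/2 := by rw [hw₀abs]; linarith
  set Kc : ℝ := |(g w₀).im| + 81*C₁*(d/2) with hKcdef
  have hKcpos : 0 < Kc := by
    rw [hKcdef]
    have := abs_nonneg ((g w₀).im)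
    nlinarith [hC₁, hd0]
  have himg : ∀ w ∈ UHP, Complex.abs w < d/2/2 → |(g w).im| ≤ Kc := by
    intro w hw hwd
    have h1 := hosc w hw hwd w₀ hw₀U hw₀r
    have h2 : Complex.abs (w - w₀) ≤ d/2 := by
      have h3 := norm_sub_le w w₀
      rw [Complex.norm_eq_abs, Complex.norm_eq_abs, Complex.norm_eq_abs] at h3
      rw [hw₀abs] at h3
      linarith
    have h3 : |(g w).im - (g w₀).im| ≤ Complex.abs (g w - g w₀) := by
      simpa using Complex.abs_im_le_norm (g w - g w₀)
    have h4 : Complex.abs (g w - g w₀) ≤ 81*C₁*(d/2) :=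
      le_trans h1 (mul_le_mul_of_nonneg_left h2 (by positivity))
    calc |(g w).im| ≤ |(g w).im - (g w₀).im| + |(g w₀).im| := by
          simpa using abs_add_le ((g w).im - (g w₀).im) ((g w₀).im)
      _ ≤ Kc := by rw [hKcdef]; linarith
  -- conclusion
  rw [tendsto_atTop]
  intro N
  have habs0 : Tendsto (fun w : ℂ => Complex.abs w) (𝓝[UHP] 0) (𝓝 0) := by
    have h0 : Tendsto (fun w : ℂ => Complex.abs w) (𝓝 0) (𝓝 0) := by
      simpa using Complex.continuous_abs.tendsto (0 : ℂ)
    exact h0.mono_left nhdsWithin_le_nhds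
  have hc₀abs : 0 < |c₀| := abs_pos.2 hc₀
  set δ : ℝ := min (d/8) (Real.exp (-(|N| + Kc + 1)/|c₀|)) with hδdef
  have hδ0 : 0 < δ := lt_min (by positivity) (Real.exp_pos _)
  have hev := habs0.eventually_lt_const hδ0
  filter_upwards [hev, self_mem_nhdsWithin] with w h1 h2
  have hwim : 0 < w.im := h2
  have hwne : w ≠ 0 := by
    intro h
    rw [h] at hwim
    simp at hwim
  have habsw : 0 < Complex.abs w := norm_pos_iff.mpr hwne
  have hwd : Complex.abs w < d/2/2 := by
    have := lt_of_lt_of_le h1 (min_le_left _ _)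
    linarith
  have hKb := himg w h2 hwd
  have hlog : Real.log (Complex.abs w) < -(|N| + Kc + 1)/|c₀| := by
    have h3 := Real.log_lt_log habsw (lt_of_lt_of_le h1 (min_le_right _ _))
    rwa [Real.log_exp] at h3
  have hlogneg : Real.log (Complex.abs w) < 0 := by
    apply lt_of_lt_of_le hlog
    apply le_of_lt
    apply div_neg_of_neg_of_pos _ hc₀abs
    have := abs_nonneg N
    linarith
  have h5 : |N| + Kc + 1 < |c₀| * (-Real.log (Complex.abs w)) := by
    have h6 : (|N| + Kc + 1)/|c₀| < -Real.log (Complex.abs w) := by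
      have := hlog
      have h7 : -(-(|N| + Kc + 1)/|c₀|) = (|N| + Kc + 1)/|c₀| := by ring
      linarith
    calc |N| + Kc + 1 = |c₀| * ((|N| + Kc + 1)/|c₀|) := by field_simp
      _ < |c₀| * (-Real.log (Complex.abs w)) := mul_lt_mul_of_pos_left h6 hc₀abs
  have h7 : |c₀ * Real.log (Complex.abs w)| = |c₀| * (-Real.log (Complex.abs w)) := by
    rw [abs_mul, abs_of_neg hlogneg]
  have h9 : c₀ * Real.log (Complex.abs w) = tstar w - (g w).im := by
    have := hgim w
    linarith
  have h10 : |c₀ * Real.log (Complex.abs w)| ≤ |tstar w| + |(g w).im| := by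
    rw [h9]
    have := abs_add_le (tstar w) (-((g w).im))
    rw [abs_neg] at this
    rw [sub_eq_add_neg]
    exact this
  have h11 := le_abs_self N
  rw [h7] at h10
  linarith
end

section
/- Let ε > 0 and let W : ℝ → ℝ be a bounded measurable function with W = 0 almost everywhere on (−ε, ε). Then the Poisson integral P_W(ξ + iη) = (1/π) ∫_ℝ η/((ξ−s)² + η²) W(s) ds, which is bounded and harmonic on ℍ, extends continuously to ℍ ∪ (−ε, ε) with boundary value 0 on (−ε, ε), and extends further to a harmonic function u on the disk {w : |w| < ε} satisfying u(conj w) = −u(w); in particular, any harmonic conjugate of P_W on ℍ has a finite limit along each ray r e^{iθ}, r ↓ 0, for θ ∈ (0,π). -/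
open Complex Set Function Filter MeasureTheory Topology

/-- The Poisson integral of a boundary function `φ : ℝ → ℝ` on the upper half-plane:
`P_φ(ξ + iη) = (1/π) ∫_ℝ η/((ξ-s)² + η²) · φ(s) ds`. -/
noncomputable def poissonIntegral (φ : ℝ → ℝ) (w : ℂ) : ℝ :=
  (1 / Real.pi) * ∫ s : ℝ, (w.im / ((w.re - s) ^ 2 + w.im ^ 2)) * φ s

namespace AuxP

/-- The Cauchy-type kernel, normalized to be integrable. -/
noncomputable def cker (w : ℂ) (s : ℝ) : ℂ :=
  ((s : ℂ) - w)⁻¹ - (s : ℂ) / ((s : ℂ) ^ 2 + 1)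

noncomputable def GInt (V : ℝ → ℝ) (w : ℂ) : ℂ := ∫ s : ℝ, (V s : ℂ) * cker w s

noncomputable def USet (ε : ℝ) : Set ℂ := UHP ∪ Metric.ball 0 ε

lemma isOpen_UHP : IsOpen UHP := isOpen_lt continuous_const Complex.continuous_im

lemma isOpen_USet (ε : ℝ) : IsOpen (USet ε) := isOpen_UHP.union Metric.isOpen_ball

lemma kernel_eq (ξ η : ℝ) (hη : η ≠ 0) (s : ℝ) :
    η / ((ξ - s) ^ 2 + η ^ 2) = η⁻¹ * (1 + ((s - ξ) / η) ^ 2)⁻¹ := by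
  have h1 : (ξ - s) ^ 2 + η ^ 2 ≠ 0 := by positivity
  field_simp
  ring

lemma integrable_poissonKernel (ξ η : ℝ) (hη : 0 < η) :
    Integrable (fun s : ℝ => η / ((ξ - s) ^ 2 + η ^ 2)) := by
  have h1 : Integrable (fun x : ℝ => (1 + x ^ 2)⁻¹) := integrable_inv_one_add_sq
  have h2 : Integrable (fun x : ℝ => (1 + (x / η) ^ 2)⁻¹) := h1.comp_div hη.ne'
  have h3 : Integrable (fun x : ℝ => (1 + ((x - ξ) / η) ^ 2)⁻¹) := h2.comp_sub_right ξ
  have h4 := h3.const_mul η⁻¹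
  exact h4.congr (Eventually.of_forall fun s => (kernel_eq ξ η hη.ne' s).symm)

lemma integral_poissonKernel (ξ η : ℝ) (hη : 0 < η) :
    ∫ s : ℝ, η / ((ξ - s) ^ 2 + η ^ 2) = Real.pi := by
  have h0 : ∀ s : ℝ, η / ((ξ - s) ^ 2 + η ^ 2) = η⁻¹ * (1 + ((s - ξ) / η) ^ 2)⁻¹ :=
    kernel_eq ξ η hη.ne'
  simp_rw [h0]
  rw [MeasureTheory.integral_const_mul]
  have h1 : (∫ s : ℝ, (1 + ((s - ξ) / η) ^ 2)⁻¹) = ∫ s : ℝ, (1 + (s / η) ^ 2)⁻¹ :=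
    integral_sub_right_eq_self (fun t : ℝ => (1 + (t / η) ^ 2)⁻¹) ξ
  rw [h1, MeasureTheory.Measure.integral_comp_div (fun t : ℝ => (1 + t ^ 2)⁻¹) η,
    integral_univ_inv_one_add_sq]
  rw [abs_of_pos hη, smul_eq_mul]
  field_simp


lemma not_mem_USet (ε : ℝ) (s : ℝ) (hs : ε ≤ |s|) : (s : ℂ) ∉ USet ε := by
  rintro (h | h)
  · simpa [UHP] using h
  · rw [Metric.mem_ball, dist_zero_right, Complex.norm_real, Real.norm_eq_abs] at h
    exact absurd h (not_lt.2 hs)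

/-- Separation: around any point of `USet ε` there is a ball on which `s - w` is
bounded below by `c * (1 + |s|)` for all `s` in the support region. -/
lemma sep {ε : ℝ} {w₀ : ℂ} (hw₀ : w₀ ∈ USet ε) (hU : IsOpen (USet ε)) :
    ∃ δ > 0, ∃ c > 0, Metric.ball w₀ δ ⊆ USet ε ∧
      ∀ w ∈ Metric.ball w₀ δ, ∀ s : ℝ, ε ≤ |s| → c * (1 + |s|) ≤ ‖(s : ℂ) - w‖ := by
  obtain ⟨r, hr, hball⟩ := Metric.isOpen_iff.1 hU w₀ hw₀
  set δ := r / 3 with hδdef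
  have hδ : 0 < δ := by positivity
  set R := ‖w₀‖ + δ with hRdef
  have hR0 : 0 < R := by positivity
  have hsep : ∀ w ∈ Metric.ball w₀ δ, ∀ s : ℝ, ε ≤ |s| → δ ≤ ‖(s : ℂ) - w‖ := by
    intro w hw s hs
    by_contra hlt
    push_neg at hlt
    have h1 : (s : ℂ) ∈ Metric.ball w₀ r := by
      rw [Metric.mem_ball] at hw ⊢
      have : dist (s : ℂ) w₀ ≤ dist (s : ℂ) w + dist w w₀ := dist_triangle _ _ _
      simp only [dist_eq_norm] at this hw ⊢
      have h2 : ‖(s : ℂ) - w‖ < δ := hlt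
      have h3 : r = 3 * δ := by rw [hδdef]; ring
      linarith
    exact not_mem_USet ε s hs (hball h1)
  refine ⟨δ, hδ, min (δ / (2 * R + 2)) (1 / 2), by positivity, fun z hz => hball (by
      rw [Metric.mem_ball] at hz ⊢; linarith [hz]), ?_⟩
  intro w hw s hs
  set c := min (δ / (2 * R + 2)) (1 / 2) with hcdef
  have hwR : ‖w‖ ≤ R := by
    have := Metric.mem_ball.1 hw
    rw [dist_eq_norm] at this
    have h2 : ‖w‖ - ‖w₀‖ ≤ ‖w - w₀‖ := by
      have := norm_sub_norm_le w w₀; linarith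
    linarith
  rcases le_or_gt (|s|) (2 * R + 1) with h | h
  · have h1 : c * (1 + |s|) ≤ (δ / (2 * R + 2)) * (2 * R + 2) := by
      apply mul_le_mul (min_le_left _ _) (by linarith) (by positivity) (by positivity)
    have h2 : (δ / (2 * R + 2)) * (2 * R + 2) = δ := by field_simp
    have := hsep w hw s hs
    linarith
  · have h1 : c * (1 + |s|) ≤ (1 / 2) * (1 + |s|) := by
      apply mul_le_mul_of_nonneg_right (min_le_right _ _) (by positivity)
    have h2 : |s| - ‖w‖ ≤ ‖(s : ℂ) - w‖ := by
      have := norm_sub_norm_le (s : ℂ) w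
      rw [Complex.norm_real, Real.norm_eq_abs] at this
      linarith
    linarith

lemma cker_eq {w : ℂ} {s : ℝ} (h : (s : ℂ) ≠ w) :
    cker w s = (1 + s * w) / (((s : ℂ) - w) * ((s : ℂ) ^ 2 + 1)) := by
  have h1 : ((s : ℂ) - w) ≠ 0 := sub_ne_zero.2 h
  have h2 : ((s : ℂ) ^ 2 + 1) ≠ 0 := by
    have : ((s : ℂ) ^ 2 + 1) = ((s ^ 2 + 1 : ℝ) : ℂ) := by push_cast; ring
    rw [this]
    exact_mod_cast (by positivity : (s ^ 2 + 1 : ℝ) ≠ 0)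
  rw [cker]
  field_simp
  ring

lemma norm_sq_add_one (s : ℝ) : ‖((s : ℂ) ^ 2 + 1)‖ = s ^ 2 + 1 := by
  have : ((s : ℂ) ^ 2 + 1) = ((s ^ 2 + 1 : ℝ) : ℂ) := by push_cast; ring
  rw [this, Complex.norm_real, Real.norm_eq_abs, abs_of_pos (by positivity)]

lemma cker_bound {w : ℂ} {s : ℝ} {c R : ℝ} (hc : 0 < c) (hwR : ‖w‖ ≤ R)
    (hlow : c * (1 + |s|) ≤ ‖(s : ℂ) - w‖) :
    ‖cker w s‖ ≤ (1 + R) / c * (1 + s ^ 2)⁻¹ := by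
  have habs : (0:ℝ) < 1 + |s| := by positivity
  have hne : (s : ℂ) ≠ w := by
    intro h
    rw [h, sub_self, norm_zero] at hlow
    nlinarith
  rw [cker_eq hne, norm_div, norm_mul, norm_sq_add_one]
  have hR0 : 0 ≤ R := le_trans (norm_nonneg w) hwR
  have hnum : ‖(1 : ℂ) + s * w‖ ≤ (1 + R) * (1 + |s|) := by
    calc ‖(1 : ℂ) + s * w‖ ≤ ‖(1:ℂ)‖ + ‖(s:ℂ) * w‖ := norm_add_le _ _
    _ = 1 + |s| * ‖w‖ := by rw [norm_one, norm_mul, Complex.norm_real, Real.norm_eq_abs]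
    _ ≤ 1 + |s| * R := by nlinarith [abs_nonneg s]
    _ ≤ (1 + R) * (1 + |s|) := by nlinarith [abs_nonneg s]
  have hpos : 0 < ‖(s : ℂ) - w‖ * (s ^ 2 + 1) := by
    apply mul_pos (lt_of_lt_of_le (by positivity) hlow) (by positivity)
  rw [div_le_iff₀ hpos]
  have key : (1 + R) / c * (1 + s ^ 2)⁻¹ * (‖(s : ℂ) - w‖ * (s ^ 2 + 1)) ≥
      (1 + R) / c * (1 + s ^ 2)⁻¹ * ((c * (1 + |s|)) * (s ^ 2 + 1)) := by
    apply mul_le_mul_of_nonneg_left _ (by positivity)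
    apply mul_le_mul_of_nonneg_right hlow (by positivity)
  refine le_trans hnum (le_trans ?_ key)
  have : (1 + R) / c * (1 + s ^ 2)⁻¹ * ((c * (1 + |s|)) * (s ^ 2 + 1)) =
      (1 + R) * (1 + |s|) * ((1 + s ^ 2)⁻¹ * (1 + s ^ 2)) := by
    rw [add_comm (s^2) 1]
    field_simp
  rw [this, inv_mul_cancel₀ (by positivity : (1 + s^2 : ℝ) ≠ 0), mul_one]

lemma sq_norm_bound {w : ℂ} {s : ℝ} {c : ℝ} (hc : 0 < c)
    (hlow : c * (1 + |s|) ≤ ‖(s : ℂ) - w‖) :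
    ‖(((s : ℂ) - w) ^ 2)⁻¹‖ ≤ c⁻¹ ^ 2 * (1 + s ^ 2)⁻¹ := by
  have habs : (0:ℝ) < 1 + |s| := by positivity
  have hpos : (0:ℝ) < ‖(s : ℂ) - w‖ := lt_of_lt_of_le (by positivity) hlow
  rw [norm_inv, norm_pow]
  have h1 : c ^ 2 * (1 + s ^ 2) ≤ ‖(s : ℂ) - w‖ ^ 2 := by
    have h2 : (c * (1 + |s|)) ^ 2 ≤ ‖(s : ℂ) - w‖ ^ 2 := by
      apply sq_le_sq' _ hlow; nlinarith
    have h3 : 1 + s ^ 2 ≤ (1 + |s|) ^ 2 := by nlinarith [abs_nonneg s, _root_.sq_abs s]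
    nlinarith
  rw [inv_le_iff_one_le_mul₀ (by positivity)]
  calc (1:ℝ) = (c ^ 2 * (1 + s ^ 2)) * (c⁻¹ ^ 2 * (1 + s ^ 2)⁻¹) := by
        field_simp
    _ ≤ ‖(s : ℂ) - w‖ ^ 2 * (c⁻¹ ^ 2 * (1 + s ^ 2)⁻¹) := by
        apply mul_le_mul_of_nonneg_right h1 (by positivity)
    _ = c⁻¹ ^ 2 * (1 + s ^ 2)⁻¹ * ‖(s : ℂ) - w‖ ^ 2 := by ring

section main
variable {ε M : ℝ} {V : ℝ → ℝ} (hV : Measurable V) (hM : ∀ s, |V s| ≤ M)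
  (hsupp : ∀ s : ℝ, |s| < ε → V s = 0)

lemma M_nonneg (hM : ∀ s, |V s| ≤ M) : 0 ≤ M := le_trans (abs_nonneg _) (hM 0)

lemma meas_integrand (hV : Measurable V) (w : ℂ) :
    AEStronglyMeasurable (fun s : ℝ => (V s : ℂ) * cker w s) volume := by
  apply Measurable.aestronglyMeasurable
  apply Measurable.mul
  · exact Complex.measurable_ofReal.comp hV
  · unfold cker
    apply Measurable.sub
    · exact (Complex.measurable_ofReal.sub measurable_const).inv
    · exact Complex.measurable_ofReal.div
        ((Complex.measurable_ofReal.pow_const 2).add measurable_const)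

include hV hM hsupp in
lemma integrand_norm_bound {w : ℂ} {c R : ℝ} (hc : 0 < c) (hwR : ‖w‖ ≤ R)
    (hlow : ∀ s : ℝ, ε ≤ |s| → c * (1 + |s|) ≤ ‖(s : ℂ) - w‖) (s : ℝ) :
    ‖(V s : ℂ) * cker w s‖ ≤ M * ((1 + R) / c) * (1 + s ^ 2)⁻¹ := by
  have hM0 := M_nonneg hM
  have hR0 : (0:ℝ) ≤ R := le_trans (norm_nonneg w) hwR
  rcases lt_or_ge (|s|) ε with h | h
  · rw [hsupp s h]
    simp
    positivity
  · rw [norm_mul, Complex.norm_real, Real.norm_eq_abs]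
    calc |V s| * ‖cker w s‖ ≤ M * ((1 + R) / c * (1 + s ^ 2)⁻¹) := by
          apply mul_le_mul (hM s) (cker_bound hc hwR (hlow s h)) (norm_nonneg _) hM0
      _ = M * ((1 + R) / c) * (1 + s ^ 2)⁻¹ := by ring

include hV hM hsupp in
lemma integrable_integrand {w : ℂ} (hw : w ∈ USet ε) :
    Integrable (fun s : ℝ => (V s : ℂ) * cker w s) volume := by
  obtain ⟨δ, hδ, c, hc, hball, hlow⟩ := sep hw (isOpen_USet ε)
  have hwb : w ∈ Metric.ball w δ := Metric.mem_ball_self hδ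
  refine Integrable.mono' ((integrable_inv_one_add_sq.const_mul (M * ((1 + ‖w‖) / c))))
    (meas_integrand hV w) (Eventually.of_forall fun s => ?_)
  exact integrand_norm_bound hV hM hsupp hc le_rfl (fun s hs => hlow w hwb s hs) s

include hV hM hsupp in
lemma hasDerivAt_GInt {w₀ : ℂ} (hw₀ : w₀ ∈ USet ε) :
    HasDerivAt (GInt V) (∫ s : ℝ, (V s : ℂ) * (((s : ℂ) - w₀) ^ 2)⁻¹) w₀ := by
  obtain ⟨δ, hδ, c, hc, hball, hlow⟩ := sep hw₀ (isOpen_USet ε)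
  have hM0 := M_nonneg hM
  set R := ‖w₀‖ + δ with hR
  have hbd : ∀ w ∈ Metric.ball w₀ δ, ‖w‖ ≤ R := by
    intro w hw
    rw [Metric.mem_ball, dist_eq_norm] at hw
    have := norm_sub_norm_le w w₀
    rw [hR]; linarith
  have key := hasDerivAt_integral_of_dominated_loc_of_deriv_le (μ := volume)
    (F := fun w s => (V s : ℂ) * cker w s)
    (F' := fun w s => (V s : ℂ) * (((s : ℂ) - w) ^ 2)⁻¹)
    (x₀ := w₀) (bound := fun s => M * c⁻¹ ^ 2 * (1 + s ^ 2)⁻¹) (Metric.ball_mem_nhds w₀ hδ)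
    (Eventually.of_forall fun w => meas_integrand hV w)
    ?hint ?hmeas' ?hbound ?hbint ?hdiff
  · exact key.2
  case hint =>
    refine Integrable.mono' ((integrable_inv_one_add_sq.const_mul (M * ((1 + R) / c))))
      (meas_integrand hV w₀) (Eventually.of_forall fun s => ?_)
    exact integrand_norm_bound hV hM hsupp hc (hbd w₀ (Metric.mem_ball_self hδ))
      (fun s hs => hlow w₀ (Metric.mem_ball_self hδ) s hs) s
  case hmeas' =>
    apply Measurable.aestronglyMeasurable
    exact (Complex.measurable_ofReal.comp hV).mul
      ((Complex.measurable_ofReal.sub measurable_const).pow_const 2).inv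
  case hbound =>
    refine Eventually.of_forall fun s => fun w hw => ?_
    rcases lt_or_ge (|s|) ε with h | h
    · simp only [hsupp s h, Complex.ofReal_zero, zero_mul, norm_zero]
      positivity
    · simp only [norm_mul, Complex.norm_real, Real.norm_eq_abs]
      calc |V s| * ‖(((s : ℂ) - w) ^ 2)⁻¹‖ ≤ M * (c⁻¹ ^ 2 * (1 + s ^ 2)⁻¹) := by
            apply mul_le_mul (hM s) (sq_norm_bound hc (hlow w hw s h)) (norm_nonneg _) hM0
        _ = M * c⁻¹ ^ 2 * (1 + s ^ 2)⁻¹ := by ring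
  case hbint => exact integrable_inv_one_add_sq.const_mul _
  case hdiff =>
    refine Eventually.of_forall fun s => fun w hw => ?_
    rcases lt_or_ge (|s|) ε with h | h
    · have heq : (fun w : ℂ => (V s : ℂ) * cker w s) = fun _ => 0 := by
        funext w; rw [hsupp s h]; simp
      rw [heq]
      simp only [hsupp s h, Complex.ofReal_zero, zero_mul]
      exact hasDerivAt_const w (0 : ℂ)
    · have hne : ((s:ℂ) - w) ≠ 0 := by
        have := hlow w hw s h
        intro h0
        rw [h0, norm_zero] at this
        nlinarith [abs_nonneg s]
      have h1 : HasDerivAt (fun w : ℂ => (s : ℂ) - w) (-1) w := by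
        simpa using ((hasDerivAt_id w).const_sub (s : ℂ))
      have h2 : HasDerivAt (fun w : ℂ => ((s : ℂ) - w)⁻¹)
          (-(-1) / ((s : ℂ) - w) ^ 2) w := h1.inv hne
      have h3 : HasDerivAt (fun w : ℂ => cker w s) ((((s : ℂ) - w) ^ 2)⁻¹) w := by
        have := h2.sub_const ((s : ℂ) / ((s : ℂ) ^ 2 + 1))
        rw [neg_neg, one_div] at this
        exact this
      simpa using h3.const_mul ((V s : ℂ))

include hV hM hsupp in
lemma differentiableOn_GInt : DifferentiableOn ℂ (GInt V) (USet ε) := fun w hw =>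
  ((hasDerivAt_GInt hV hM hsupp hw).differentiableAt).differentiableWithinAt

lemma cker_im (w : ℂ) (s : ℝ) :
    (cker w s).im = w.im / ((w.re - s) ^ 2 + w.im ^ 2) := by
  unfold cker
  have h1 : ((s : ℂ) / ((s : ℂ) ^ 2 + 1)) = ((s / (s ^ 2 + 1) : ℝ) : ℂ) := by
    push_cast; ring
  rw [sub_im, h1, Complex.ofReal_im, sub_zero, Complex.inv_im, Complex.normSq_apply,
    Complex.sub_re, Complex.sub_im, Complex.ofReal_re, Complex.ofReal_im, zero_sub, neg_neg]
  congr 1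
  ring

include hV hM hsupp in
lemma GInt_im {w : ℂ} (hw : w ∈ USet ε) :
    (GInt V w).im = ∫ s : ℝ, (w.im / ((w.re - s) ^ 2 + w.im ^ 2)) * V s := by
  have hint := integrable_integrand hV hM hsupp hw
  rw [GInt, ← Complex.imCLM_apply, ← ContinuousLinearMap.integral_comp_comm _ hint]
  congr 1
  funext s
  simp only [Complex.imCLM_apply, Complex.mul_im, Complex.ofReal_re, Complex.ofReal_im,
    zero_mul, add_zero, mul_comm]
  rw [cker_im]
  ring

lemma GInt_conj (V : ℝ → ℝ) (w : ℂ) :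
    GInt V ((starRingEnd ℂ) w) = (starRingEnd ℂ) (GInt V w) := by
  rw [GInt, GInt, ← integral_conj]
  congr 1
  funext s
  rw [map_mul, Complex.conj_ofReal]
  congr 1
  unfold cker
  rw [map_sub, map_inv₀, map_sub, Complex.conj_ofReal, map_div₀, map_add,
    map_pow, Complex.conj_ofReal, map_one]

end main

lemma fderiv_of_holo {G : ℂ → ℂ} {z : ℂ} (h : HasDerivAt G (deriv G z) z) (a : ℂ) :
    fderiv ℝ G z a = a * deriv G z := by
  have h1 : HasFDerivAt G (((ContinuousLinearMap.smulRight (1 : ℂ →L[ℂ] ℂ)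
      (deriv G z))).restrictScalars ℝ) z := (h.hasFDerivAt).restrictScalars ℝ
  rw [h1.fderiv]
  simp [smul_eq_mul]

/-- Real and imaginary parts (with a real scalar) of holomorphic functions are harmonic. -/
lemma harmonicOn_smul_im {G : ℂ → ℂ} {V : Set ℂ} (hV : IsOpen V)
    (hG : DifferentiableOn ℂ G V) (c : ℝ) :
    HarmonicOn (fun w => c * (G w).im) V := by
  have han : AnalyticOnNhd ℂ G V := hG.analyticOnNhd hV
  have hd : ∀ w ∈ V, DifferentiableAt ℂ G w := fun w hw => hG.differentiableAt (hV.mem_nhds hw)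
  have hd' : AnalyticOnNhd ℂ (deriv G) V := han.deriv
  have hdd : ∀ w ∈ V, DifferentiableAt ℂ (deriv G) w :=
    fun w hw => (hd' w hw).differentiableAt
  constructor
  · have h1 : ContDiffOn ℂ 2 G V := (han.contDiffOn hV.uniqueDiffOn)
    have h2 : ContDiffOn ℝ 2 G V := h1.restrict_scalars ℝ
    have h3 : ContDiffOn ℝ 2 (fun w => (G w).im) V :=
      (Complex.imCLM.contDiff.comp_contDiffOn h2)
    exact h3.const_smul c
  · intro z hz
    -- first derivatives
    have key1 : ∀ w ∈ V, fderiv ℝ (fun w => c * (G w).im) w 1 = c * (deriv G w).im := by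
      intro w hw
      have hG' := (hd w hw).hasDerivAt
      have h4 : HasFDerivAt (fun w => (G w).im)
          (Complex.imCLM.comp ((ContinuousLinearMap.smulRight (1 : ℂ →L[ℂ] ℂ)
            (deriv G w)).restrictScalars ℝ)) w :=
        (Complex.imCLM.hasFDerivAt).comp w ((hG'.hasFDerivAt).restrictScalars ℝ)
      have h5 := h4.const_mul c
      rw [h5.fderiv]
      simp [smul_eq_mul]
    have key2 : ∀ w ∈ V, fderiv ℝ (fun w => c * (G w).im) w Complex.I
        = c * (deriv G w).re := by
      intro w hw
      have hG' := (hd w hw).hasDerivAt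
      have h4 : HasFDerivAt (fun w => (G w).im)
          (Complex.imCLM.comp ((ContinuousLinearMap.smulRight (1 : ℂ →L[ℂ] ℂ)
            (deriv G w)).restrictScalars ℝ)) w :=
        (Complex.imCLM.hasFDerivAt).comp w ((hG'.hasFDerivAt).restrictScalars ℝ)
      have h5 := h4.const_mul c
      rw [h5.fderiv]
      simp [smul_eq_mul, Complex.mul_im]
    -- second derivatives
    have e1 : (fun w => fderiv ℝ (fun w => c * (G w).im) w 1)
        =ᶠ[nhds z] fun w => c * (deriv G w).im :=
      eventually_of_mem (hV.mem_nhds hz) key1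
    have e2 : (fun w => fderiv ℝ (fun w => c * (G w).im) w Complex.I)
        =ᶠ[nhds z] fun w => c * (deriv G w).re :=
      eventually_of_mem (hV.mem_nhds hz) key2
    rw [e1.fderiv_eq, e2.fderiv_eq]
    have hg2 := (hdd z hz).hasDerivAt
    have h6 : HasFDerivAt (fun w => c * (deriv G w).im)
        ((c : ℝ) • (Complex.imCLM.comp ((ContinuousLinearMap.smulRight (1 : ℂ →L[ℂ] ℂ)
          (deriv (deriv G) z)).restrictScalars ℝ))) z :=
      ((Complex.imCLM.hasFDerivAt).comp z ((hg2.hasFDerivAt).restrictScalars ℝ)).const_mul c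
    have h7 : HasFDerivAt (fun w => c * (deriv G w).re)
        ((c : ℝ) • (Complex.reCLM.comp ((ContinuousLinearMap.smulRight (1 : ℂ →L[ℂ] ℂ)
          (deriv (deriv G) z)).restrictScalars ℝ))) z :=
      ((Complex.reCLM.hasFDerivAt).comp z ((hg2.hasFDerivAt).restrictScalars ℝ)).const_mul c
    rw [h6.fderiv, h7.fderiv]
    simp only [ContinuousLinearMap.coe_smul', Pi.smul_apply, ContinuousLinearMap.coe_comp',
      Function.comp_apply, ContinuousLinearMap.coe_restrictScalars',
      ContinuousLinearMap.smulRight_apply, ContinuousLinearMap.one_apply,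
      Complex.imCLM_apply, Complex.reCLM_apply, smul_eq_mul, one_mul,
      Complex.mul_im, Complex.mul_re, Complex.I_re, Complex.I_im]
    ring

lemma HarmonicOn_congr {f g : ℂ → ℝ} {V : Set ℂ} (hV : IsOpen V)
    (h : HarmonicOn f V) (hfg : ∀ w ∈ V, f w = g w) : HarmonicOn g V := by
  constructor
  · exact (h.1.congr fun w hw => (hfg w hw).symm)
  · intro z hz
    have hfd : ∀ w ∈ V, fderiv ℝ f w = fderiv ℝ g w := fun w hw =>
      Filter.EventuallyEq.fderiv_eq
        (eventually_of_mem (hV.mem_nhds hw) hfg : f =ᶠ[nhds w] g)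
    have e1 : (fun w => fderiv ℝ g w 1) =ᶠ[nhds z] (fun w => fderiv ℝ f w 1) :=
      eventually_of_mem (hV.mem_nhds hz) (fun w hw => by simp only []; rw [hfd w hw])
    have e2 : (fun w => fderiv ℝ g w Complex.I) =ᶠ[nhds z]
        (fun w => fderiv ℝ f w Complex.I) :=
      eventually_of_mem (hV.mem_nhds hz) (fun w hw => by simp only []; rw [hfd w hw])
    rw [e1.fderiv_eq, e2.fderiv_eq]
    exact h.2 z hz

/-- A holomorphic function with vanishing real part on a convex open set is constant. -/
lemma const_of_re_eq_zero {h : ℂ → ℂ} {V : Set ℂ} (hV : IsOpen V) (hconv : Convex ℝ V)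
    (hd : DifferentiableOn ℂ h V) (hre : ∀ w ∈ V, (h w).re = 0)
    {x y : ℂ} (hx : x ∈ V) (hy : y ∈ V) : h x = h y := by
  apply hconv.is_const_of_fderivWithin_eq_zero hd _ hx hy
  intro z hz
  have hda : DifferentiableAt ℂ h z := hd.differentiableAt (hV.mem_nhds hz)
  have hdz := hda.hasDerivAt
  have hL : HasFDerivAt h (((ContinuousLinearMap.smulRight (1 : ℂ →L[ℂ] ℂ)
      (deriv h z))).restrictScalars ℝ) z := (hdz.hasFDerivAt).restrictScalars ℝ
  have hre0 : HasFDerivAt (fun w => (h w).re) (0 : ℂ →L[ℝ] ℝ) z := by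
    have : (fun w => (h w).re) =ᶠ[nhds z] fun _ => (0:ℝ) :=
      eventually_of_mem (hV.mem_nhds hz) hre
    exact (hasFDerivAt_const (0:ℝ) z).congr_of_eventuallyEq this
  have hre1 : HasFDerivAt (fun w => (h w).re)
      (Complex.reCLM.comp (((ContinuousLinearMap.smulRight (1 : ℂ →L[ℂ] ℂ)
        (deriv h z))).restrictScalars ℝ)) z := (Complex.reCLM.hasFDerivAt).comp z hL
  have huniq := hre1.unique hre0
  have hval1 : (deriv h z).re = 0 := by
    have := congrFun (congrArg DFunLike.coe huniq) 1
    simpa [smul_eq_mul] using this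
  have hval2 : (deriv h z).im = 0 := by
    have := congrFun (congrArg DFunLike.coe huniq) Complex.I
    simpa [smul_eq_mul, Complex.mul_re] using this
  have hder0 : deriv h z = 0 := Complex.ext hval1 hval2
  rw [fderivWithin_of_isOpen hV hz]
  have : fderiv ℂ h z = ContinuousLinearMap.smulRight (1 : ℂ →L[ℂ] ℂ) (deriv h z) :=
    hdz.hasFDerivAt.fderiv
  rw [this, hder0]
  ext
  simp

end AuxP

/-- **Regular behavior of the Poisson integral of a boundary function vanishing near `0`.**
If `W : ℝ → ℝ` is bounded measurable with `W = 0` a.e. on `(-ε,ε)`, then its Poisson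
integral `P_W` is bounded and harmonic on `ℍ`, extends continuously to `ℍ ∪ (-ε,ε)` with
boundary value `0` on `(-ε,ε)`, and extends further to a harmonic function `u` on the disk
`{|w| < ε}` with `u(conj w) = -u(w)`; in particular any harmonic conjugate of `P_W` on `ℍ`
has a finite limit along each ray `r e^{iθ}`, `r ↓ 0`, for `θ ∈ (0,π)`. -/
theorem poisson_integral_vanishing_near_zero
    (ε : ℝ) (hε : 0 < ε) (W : ℝ → ℝ)
    (hmeas : Measurable W)
    (hbd : ∃ M : ℝ, ∀ s : ℝ, |W s| ≤ M)
    (hae : ∀ᵐ s ∂(volume.restrict (Set.Ioo (-ε) ε)), W s = 0) :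
    HarmonicOn (poissonIntegral W) UHP ∧
    (∃ M : ℝ, ∀ w ∈ UHP, |poissonIntegral W w| ≤ M) ∧
    (∃ F : ℂ → ℝ,
      ContinuousOn F (UHP ∪ (Complex.ofReal '' Set.Ioo (-ε) ε)) ∧
      Set.EqOn F (poissonIntegral W) UHP ∧
      ∀ s ∈ Set.Ioo (-ε) ε, F (s : ℂ) = 0) ∧
    (∃ u : ℂ → ℝ,
      HarmonicOn u (Metric.ball (0 : ℂ) ε) ∧
      Set.EqOn u (poissonIntegral W) (Metric.ball (0 : ℂ) ε ∩ UHP) ∧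
      ∀ w ∈ Metric.ball (0 : ℂ) ε, u ((starRingEnd ℂ) w) = - u w) ∧
    (∀ v : ℂ → ℝ,
      DifferentiableOn ℂ
        (fun w => (poissonIntegral W w : ℂ) + Complex.I * (v w : ℂ)) UHP →
      ∀ θ ∈ Set.Ioo 0 Real.pi, ∃ l : ℝ,
        Tendsto (fun r : ℝ => v ((r : ℂ) * Complex.exp ((θ : ℂ) * Complex.I)))
          (𝓝[>] 0) (𝓝 l)) := by
  classical
  open AuxP in
  obtain ⟨M, hM⟩ := hbd
  -- the modified boundary function, vanishing identically on `(-ε, ε)`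
  set V : ℝ → ℝ := fun s => if |s| < ε then 0 else W s with hVdef
  have hVmeas : Measurable V := by
    apply Measurable.ite _ measurable_const hmeas
    exact measurableSet_lt (_root_.measurable_abs) measurable_const
  have hVM : ∀ s, |V s| ≤ M := by
    intro s
    by_cases h : |s| < ε
    · simp only [hVdef, if_pos h, abs_zero]
      exact le_trans (abs_nonneg _) (hM 0)
    · simp only [hVdef, if_neg h]
      exact hM s
  have hVsupp : ∀ s : ℝ, |s| < ε → V s = 0 := fun s h => by simp [hVdef, if_pos h]
  -- `W = V` almost everywhere
  have haeWV : W =ᵐ[volume] V := by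
    have h1 : ∀ᵐ s ∂(volume : Measure ℝ), s ∈ Set.Ioo (-ε) ε → W s = 0 :=
      (ae_restrict_iff' measurableSet_Ioo).1 hae
    filter_upwards [h1] with s hs
    by_cases h : |s| < ε
    · rw [hVdef]
      simp only [if_pos h]
      exact hs ⟨neg_lt_of_abs_lt h, lt_of_abs_lt h⟩
    · simp [hVdef, if_neg h]
  have hPeq : ∀ w : ℂ, poissonIntegral W w = poissonIntegral V w := by
    intro w
    unfold poissonIntegral
    congr 1
    apply integral_congr_ae
    filter_upwards [haeWV] with s hs
    rw [hs]
  have hUopen := isOpen_USet ε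
  have hGdiff : DifferentiableOn ℂ (GInt V) (USet ε) :=
    differentiableOn_GInt hVmeas hVM hVsupp
  have hUHPsub : UHP ⊆ USet ε := Set.subset_union_left
  have hBallsub : Metric.ball (0:ℂ) ε ⊆ USet ε := Set.subset_union_right
  have hPG : ∀ w ∈ USet ε, poissonIntegral W w = (1 / Real.pi) * (GInt V w).im := by
    intro w hw
    rw [hPeq, poissonIntegral, GInt_im hVmeas hVM hVsupp hw]
  have hGim : ∀ w ∈ USet ε, (GInt V w).im = Real.pi * poissonIntegral W w := by
    intro w hw
    rw [hPG w hw]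
    field_simp
  -- Part 1: harmonicity
  have part1 : HarmonicOn (poissonIntegral W) UHP := by
    apply HarmonicOn_congr isOpen_UHP
      (harmonicOn_smul_im isOpen_UHP (hGdiff.mono hUHPsub) (1 / Real.pi))
    intro w hw
    exact (hPG w (hUHPsub hw)).symm
  -- Part 2: boundedness
  have part2 : ∀ w ∈ UHP, |poissonIntegral W w| ≤ M := by
    intro w hw
    have hη : 0 < w.im := hw
    have hker_int := integrable_poissonKernel w.re w.im hη
    have hker_nonneg : ∀ s : ℝ, 0 ≤ w.im / ((w.re - s) ^ 2 + w.im ^ 2) := by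
      intro s; positivity
    have hmeas_f : AEStronglyMeasurable
        (fun s : ℝ => (w.im / ((w.re - s) ^ 2 + w.im ^ 2)) * W s) volume := by
      apply Measurable.aestronglyMeasurable
      exact (measurable_const.div
        (((measurable_const.sub measurable_id).pow_const 2).add measurable_const)).mul hmeas
    have hf_int : Integrable (fun s : ℝ => (w.im / ((w.re - s) ^ 2 + w.im ^ 2)) * W s) := by
      refine Integrable.mono' (hker_int.const_mul M) hmeas_f (Eventually.of_forall fun s => ?_)
      rw [Real.norm_eq_abs, abs_mul, _root_.abs_of_nonneg (hker_nonneg s)]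
      calc w.im / ((w.re - s) ^ 2 + w.im ^ 2) * |W s|
          ≤ w.im / ((w.re - s) ^ 2 + w.im ^ 2) * M :=
            mul_le_mul_of_nonneg_left (hM s) (hker_nonneg s)
        _ = M * (w.im / ((w.re - s) ^ 2 + w.im ^ 2)) := by ring
    have hbound : |∫ s : ℝ, (w.im / ((w.re - s) ^ 2 + w.im ^ 2)) * W s| ≤ M * Real.pi := by
      calc |∫ s : ℝ, (w.im / ((w.re - s) ^ 2 + w.im ^ 2)) * W s|
          ≤ ∫ s : ℝ, |(w.im / ((w.re - s) ^ 2 + w.im ^ 2)) * W s| := by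
            exact
              norm_integral_le_integral_norm (μ := volume)
                (fun s : ℝ => (w.im / ((w.re - s) ^ 2 + w.im ^ 2)) * W s)
        _ ≤ ∫ s : ℝ, M * (w.im / ((w.re - s) ^ 2 + w.im ^ 2)) := by
            apply integral_mono hf_int.abs (hker_int.const_mul M)
            intro s
            dsimp only
            rw [abs_mul, _root_.abs_of_nonneg (hker_nonneg s)]
            calc w.im / ((w.re - s) ^ 2 + w.im ^ 2) * |W s|
                ≤ w.im / ((w.re - s) ^ 2 + w.im ^ 2) * M :=
                  mul_le_mul_of_nonneg_left (hM s) (hker_nonneg s)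
              _ = M * (w.im / ((w.re - s) ^ 2 + w.im ^ 2)) := by ring
        _ = M * Real.pi := by
            rw [MeasureTheory.integral_const_mul, integral_poissonKernel w.re w.im hη]
    rw [poissonIntegral, abs_mul, abs_of_pos (by positivity : (0:ℝ) < 1 / Real.pi)]
    calc 1 / Real.pi * |∫ s : ℝ, (w.im / ((w.re - s) ^ 2 + w.im ^ 2)) * W s|
        ≤ 1 / Real.pi * (M * Real.pi) :=
          mul_le_mul_of_nonneg_left hbound (by positivity)
      _ = M := by field_simp
  -- the continuous/harmonic extension
  set F : ℂ → ℝ := fun w => (1 / Real.pi) * (GInt V w).im with hFdef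
  have hFcont : ContinuousOn F (USet ε) :=
    continuousOn_const.mul (Complex.continuous_im.comp_continuousOn hGdiff.continuousOn)
  have part3 : ∃ F : ℂ → ℝ,
      ContinuousOn F (UHP ∪ (Complex.ofReal '' Set.Ioo (-ε) ε)) ∧
      Set.EqOn F (poissonIntegral W) UHP ∧
      ∀ s ∈ Set.Ioo (-ε) ε, F (s : ℂ) = 0 := by
    refine ⟨F, ?_, ?_, ?_⟩
    · apply hFcont.mono
      rintro x (hx | ⟨s, hs, rfl⟩)
      · exact hUHPsub hx
      · apply hBallsub
        rw [Metric.mem_ball, dist_zero_right, Complex.norm_real, Real.norm_eq_abs]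
        exact abs_lt.2 ⟨hs.1, hs.2⟩
    · intro w hw
      exact (hPG w (hUHPsub hw)).symm
    · intro s hs
      have hsU : (s : ℂ) ∈ USet ε := by
        apply hBallsub
        rw [Metric.mem_ball, dist_zero_right, Complex.norm_real, Real.norm_eq_abs]
        exact abs_lt.2 ⟨hs.1, hs.2⟩
      have h1 := GInt_im hVmeas hVM hVsupp hsU
      rw [hFdef]
      simp only [h1, Complex.ofReal_im, zero_div, zero_mul, integral_zero, mul_zero]
  have part4 : ∃ u : ℂ → ℝ,
      HarmonicOn u (Metric.ball (0 : ℂ) ε) ∧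
      Set.EqOn u (poissonIntegral W) (Metric.ball (0 : ℂ) ε ∩ UHP) ∧
      ∀ w ∈ Metric.ball (0 : ℂ) ε, u ((starRingEnd ℂ) w) = - u w := by
    refine ⟨F, ?_, ?_, ?_⟩
    · exact harmonicOn_smul_im Metric.isOpen_ball (hGdiff.mono hBallsub) (1 / Real.pi)
    · intro w hw
      exact (hPG w (hUHPsub hw.2)).symm
    · intro w _
      rw [hFdef]
      simp only [GInt_conj, Complex.conj_im]
      ring
  refine ⟨part1, ⟨M, part2⟩, part3, part4, ?_⟩
  -- Part 5: radial limits of harmonic conjugates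
  intro v hv θ hθ
  set f : ℂ → ℂ := fun w => (poissonIntegral W w : ℂ) + Complex.I * (v w : ℂ) with hfdef
  set h : ℂ → ℂ := fun w => (Real.pi : ℂ) * f w + Complex.I * GInt V w with hhdef
  have hhdiff : DifferentiableOn ℂ h UHP :=
    (hv.const_mul _).add ((hGdiff.mono hUHPsub).const_mul Complex.I)
  have hhre : ∀ w ∈ UHP, (h w).re = 0 := by
    intro w hw
    have h1 : (f w).re = poissonIntegral W w := by
      simp [hfdef, Complex.add_re, Complex.mul_re]
    have h2 : ((Real.pi : ℂ) * f w).re = Real.pi * poissonIntegral W w := by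
      rw [Complex.mul_re, h1]
      simp [hfdef, Complex.ofReal_im]
    rw [hhdef]
    simp only [Complex.add_re, h2, Complex.mul_re, Complex.I_re, Complex.I_im]
    rw [hGim w (hUHPsub hw)]
    ring
  have hIU : Complex.I ∈ UHP := by simp [UHP]
  have hconst : ∀ w ∈ UHP, h w = h Complex.I := fun w hw =>
    const_of_re_eq_zero isOpen_UHP (convex_halfSpace_im_gt 0) hhdiff hhre hw hIU
  -- the formula for `v` on the upper half-plane
  have hvformula : ∀ w ∈ UHP,
      v w = (1 / Real.pi) * ((h Complex.I).im - (GInt V w).re) := by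
    intro w hw
    have h1 := congrArg Complex.im (hconst w hw)
    have h2 : (f w).im = v w := by
      simp [hfdef, Complex.add_im, Complex.mul_im]
    have h3 : (h w).im = Real.pi * v w + (GInt V w).re := by
      rw [hhdef]
      simp only [Complex.add_im, Complex.mul_im, Complex.I_re, Complex.I_im,
        Complex.ofReal_re, Complex.ofReal_im, h2]
      ring
    rw [h3] at h1
    have hπ : Real.pi ≠ 0 := Real.pi_ne_zero
    field_simp
    linarith [h1]
  -- the ray lies in the upper half-plane
  have hsin : 0 < Real.sin θ := Real.sin_pos_of_pos_of_lt_pi hθ.1 hθ.2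
  have him : ∀ r : ℝ, ((r : ℂ) * Complex.exp ((θ : ℂ) * Complex.I)).im = r * Real.sin θ := by
    intro r
    simp [Complex.exp_mul_I, Complex.mul_im, Complex.add_im, Complex.add_re,
      Complex.mul_re, Complex.sin_ofReal_re, Complex.cos_ofReal_im,
      Complex.sin_ofReal_im, Complex.cos_ofReal_re]
  have hray : ∀ r : ℝ, 0 < r → ((r : ℂ) * Complex.exp ((θ : ℂ) * Complex.I)) ∈ UHP := by
    intro r hr
    show 0 < ((r : ℂ) * Complex.exp ((θ : ℂ) * Complex.I)).im
    rw [him r]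
    positivity
  -- continuity of `GInt V` at the origin
  have h0U : (0 : ℂ) ∈ USet ε := hBallsub (by simpa using hε)
  have hGc : ContinuousAt (GInt V) 0 :=
    ((hasDerivAt_GInt hVmeas hVM hVsupp h0U).differentiableAt).continuousAt
  refine ⟨(1 / Real.pi) * ((h Complex.I).im - (GInt V 0).re), ?_⟩
  have hγ : Tendsto (fun r : ℝ => (r : ℂ) * Complex.exp ((θ : ℂ) * Complex.I))
      (𝓝[>] (0:ℝ)) (𝓝 (0:ℂ)) := by
    have hcont : Continuous (fun r : ℝ => (r : ℂ) * Complex.exp ((θ : ℂ) * Complex.I)) :=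
      Complex.continuous_ofReal.mul continuous_const
    have h1 : Tendsto (fun r : ℝ => (r : ℂ) * Complex.exp ((θ : ℂ) * Complex.I))
        (𝓝 (0:ℝ)) (𝓝 ((0:ℂ) * Complex.exp ((θ : ℂ) * Complex.I))) := by
      simpa using hcont.tendsto 0
    have h2 := h1.mono_left (nhdsWithin_le_nhds (s := Set.Ioi (0:ℝ)))
    simpa using h2
  have hG0 : Tendsto (fun r : ℝ => (GInt V ((r : ℂ) * Complex.exp ((θ : ℂ) * Complex.I))).re)
      (𝓝[>] (0:ℝ)) (𝓝 ((GInt V 0).re)) :=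
    (Complex.continuous_re.continuousAt.tendsto.comp (hGc.tendsto.comp hγ))
  have hbase : Tendsto (fun r : ℝ =>
      (1 / Real.pi) * ((h Complex.I).im -
        (GInt V ((r : ℂ) * Complex.exp ((θ : ℂ) * Complex.I))).re))
      (𝓝[>] (0:ℝ)) (𝓝 ((1 / Real.pi) * ((h Complex.I).im - (GInt V 0).re))) :=
    (tendsto_const_nhds.sub hG0).const_mul _
  apply hbase.congr'
  filter_upwards [self_mem_nhdsWithin] with r hr
  exact (hvformula _ (hray r hr)).symm
end
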